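/- arXiv:0812.1775 — 4 statements merged into one kernel-verified Lean document; each statement's English description precedes it below -/
import Mathlib

section
/- For all a > 0 and p > 0, the Laplace transform of t ↦ I₀(2√(a t)) equals (1/p)·exp(a/p), i.e. ∫₀^∞ I₀(2√(a t)) e^{-p t} dt = (1/p) e^{a/p}, where I₀(z) = Σ_{k=0}^∞ (z/2)^{2k} / (k!)² is the modified Bessel function of order 0. -/
open MeasureTheory Real Filter Set

noncomputable def besselI0 (z : ℝ) : ℝ :=
  ∑' k : ℕ, (z / 2) ^ (2 * k) / ((Nat.factorial k : ℝ)) ^ 2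

noncomputable def besselI1 (z : ℝ) : ℝ :=
  ∑' k : ℕ, (z / 2) ^ (2 * k + 1) / ((Nat.factorial k : ℝ) * (Nat.factorial (k + 1) : ℝ))

lemma aux_integrable (p : ℝ) (hp : 0 < p) (k : ℕ) :
    IntegrableOn (fun t : ℝ => t ^ k * Real.exp (-(p * t))) (Ioi 0) := by
  have h := integrableOn_rpow_mul_exp_neg_mul_rpow (p := 1) (s := (k : ℝ)) (b := p)
    (lt_of_lt_of_le neg_one_lt_zero (Nat.cast_nonneg k)) one_pos hp
  refine h.congr_fun (fun x hx => ?_) measurableSet_Ioi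
  beta_reduce
  rw [Real.rpow_one, Real.rpow_natCast, neg_mul]

lemma aux_integral (p : ℝ) (hp : 0 < p) (k : ℕ) :
    ∫ t in Ioi (0:ℝ), t ^ k * Real.exp (-(p * t)) = (Nat.factorial k : ℝ) / p ^ (k + 1) := by
  have h := Real.integral_rpow_mul_exp_neg_mul_Ioi (a := (k : ℝ) + 1) (r := p)
    (by positivity) hp
  have heq : ∀ t ∈ Ioi (0:ℝ), t ^ ((k : ℝ) + 1 - 1) * Real.exp (-(p * t))
      = t ^ k * Real.exp (-(p * t)) := by
    intro t ht
    rw [add_sub_cancel_right, Real.rpow_natCast]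
  rw [setIntegral_congr_fun measurableSet_Ioi heq] at h
  rw [h, Real.Gamma_nat_eq_factorial]
  have : (k : ℝ) + 1 = ((k + 1 : ℕ) : ℝ) := by push_cast; ring
  rw [this, Real.rpow_natCast, div_pow, one_pow]
  ring

theorem stmt_0 (a p : ℝ) (ha : 0 < a) (hp : 0 < p) :
    ∫ t in Ioi (0:ℝ), besselI0 (2 * Real.sqrt (a * t)) * Real.exp (-p * t)
      = (1 / p) * Real.exp (a / p) := by
  set F : ℕ → ℝ → ℝ := fun k t => (a ^ k / (Nat.factorial k : ℝ) ^ 2) * (t ^ k * Real.exp (-(p * t)))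
  have hFint : ∀ k, Integrable (F k) (volume.restrict (Ioi 0)) := by
    intro k
    exact ((aux_integrable p hp k).const_mul _)
  have hFval : ∀ k, ∫ t in Ioi (0:ℝ), F k t
      = (1 / p) * ((a / p) ^ k / (Nat.factorial k : ℝ)) := by
    intro k
    rw [integral_const_mul, aux_integral p hp k]
    have hk : (Nat.factorial k : ℝ) ≠ 0 := Nat.cast_ne_zero.mpr (Nat.factorial_ne_zero k)
    field_simp
    rw [div_pow, pow_succ]
    field_simp
  have hsum : Summable fun k => ∫ t in Ioi (0:ℝ), ‖F k t‖ := by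
    have : ∀ k, ∫ t in Ioi (0:ℝ), ‖F k t‖ = ∫ t in Ioi (0:ℝ), F k t := by
      intro k
      refine setIntegral_congr_fun measurableSet_Ioi (fun t ht => ?_)
      have ht' : (0:ℝ) < t := ht
      rw [Real.norm_eq_abs, abs_of_nonneg]
      positivity
    simp_rw [this, hFval]
    apply Summable.mul_left
    exact Real.summable_pow_div_factorial (a / p)
  have hswap := MeasureTheory.integral_tsum_of_summable_integral_norm hFint hsum
  have hpt : ∀ t ∈ Ioi (0:ℝ), ∑' k, F k t
      = besselI0 (2 * Real.sqrt (a * t)) * Real.exp (-p * t) := by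
    intro t ht
    have ht' : (0:ℝ) < t := ht
    rw [besselI0, ← tsum_mul_right]
    congr 1
    ext k
    have h1 : (2 * Real.sqrt (a * t) / 2) = Real.sqrt (a * t) := by ring
    rw [h1]
    have h2 : Real.sqrt (a * t) ^ (2 * k) = (a * t) ^ k := by
      rw [pow_mul, Real.sq_sqrt (by positivity)]
    rw [h2, mul_pow]
    have : -p * t = -(p * t) := by ring
    rw [this]
    simp only [F]
    ring
  rw [← setIntegral_congr_fun measurableSet_Ioi hpt, ← hswap]
  simp_rw [hFval]
  rw [tsum_mul_left]
  congr 1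
  rw [Real.exp_eq_exp_ℝ, NormedSpace.exp_eq_tsum_div]
end

section
/- For all λ > 0, μ > 0, s > 0 and x > 0, ∫_x^∞ √(λμx/(t−x)) · I₁(2√(λμ x (t−x))) · e^{-λx} e^{-μ(t−x)} e^{-s t} dt + e^{-(λ+s)x} = e^{-x(s+λ)} e^{λμx/(s+μ)}. -/
open MeasureTheory Real Filter Set

lemma exp_tail (y : ℝ) : ∑' k : ℕ, y ^ (k + 1) / (Nat.factorial (k + 1) : ℝ) = Real.exp y - 1 := by
  have h := Real.summable_pow_div_factorial y
  have hexp : Real.exp y = ∑' n : ℕ, y ^ n / (Nat.factorial n : ℝ) := by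
    rw [Real.exp_eq_exp_ℝ]; exact congrFun NormedSpace.exp_eq_tsum_div y
  rw [hexp, Summable.tsum_eq_zero_add h]; simp

lemma series_eq (a u : ℝ) (ha : 0 < a) (hu : 0 < u) :
    Real.sqrt (a / u) * besselI1 (2 * Real.sqrt (a * u)) =
      ∑' k : ℕ, a ^ (k + 1) * u ^ k / ((Nat.factorial k : ℝ) * (Nat.factorial (k + 1) : ℝ)) := by
  have hau : (0:ℝ) ≤ a * u := by positivity
  rw [besselI1, ← tsum_mul_left]
  congr 1; funext k
  have h2 : 2 * Real.sqrt (a * u) / 2 = Real.sqrt (a * u) := by ring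
  have hpow : Real.sqrt (a * u) ^ (2 * k + 1) = (a * u) ^ k * Real.sqrt (a * u) := by
    rw [pow_succ, pow_mul, Real.sq_sqrt hau]
  have hs2 : Real.sqrt (a / u) * Real.sqrt (a * u) = a := by
    rw [← Real.sqrt_mul (by positivity) (a * u),
      show a / u * (a * u) = a ^ 2 by field_simp, Real.sqrt_sq ha.le]
  rw [h2, hpow, mul_div_assoc' (Real.sqrt (a/u)),
    show Real.sqrt (a/u) * ((a*u)^k * Real.sqrt (a*u)) = (Real.sqrt (a/u) * Real.sqrt (a*u)) * (a*u)^k by ring,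
    hs2, mul_pow]
  ring

lemma pow_exp_integrable (k : ℕ) (c : ℝ) (hc : 0 < c) :
    IntegrableOn (fun u : ℝ => u ^ k * Real.exp (-(c * u))) (Ioi 0) := by
  have h := integrableOn_rpow_mul_exp_neg_mul_rpow (p := 1) (s := (k : ℝ)) (b := c)
    (lt_of_lt_of_le neg_one_lt_zero (Nat.cast_nonneg k)) one_pos hc
  refine h.congr_fun (fun u hu => ?_) measurableSet_Ioi
  dsimp only
  rw [Real.rpow_one, Real.rpow_natCast, neg_mul]

lemma pow_exp_integral (k : ℕ) (c : ℝ) (hc : 0 < c) :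
    ∫ u in Ioi (0:ℝ), u ^ k * Real.exp (-(c * u)) = (1 / c) ^ (k + 1) * (Nat.factorial k : ℝ) := by
  have h := Real.integral_rpow_mul_exp_neg_mul_Ioi (a := (k : ℝ) + 1) (r := c)
    (by positivity) hc
  rw [show ((k:ℝ) + 1 - 1) = (k:ℝ) by ring] at h
  simp_rw [Real.rpow_natCast] at h
  rw [h, Real.Gamma_nat_eq_factorial, show ((k:ℝ) + 1) = ((k + 1 : ℕ) : ℝ) by push_cast; ring,
    Real.rpow_natCast]

theorem stmt_5 (lam mu s x : ℝ) (hlam : 0 < lam) (hmu : 0 < mu) (hs : 0 < s) (hx : 0 < x) :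
    (∫ t in Ioi x,
      Real.sqrt (lam * mu * x / (t - x)) * besselI1 (2 * Real.sqrt (lam * mu * x * (t - x)))
        * Real.exp (-lam * x) * Real.exp (-mu * (t - x)) * Real.exp (-s * t))
      + Real.exp (-(lam + s) * x)
    = Real.exp (-x * (s + lam)) * Real.exp (lam * mu * x / (s + mu)) := by
  set a : ℝ := lam * mu * x with ha_def
  have ha : 0 < a := by positivity
  set c : ℝ := mu + s with hc_def
  have hc : 0 < c := by positivity
  set D : ℝ := Real.exp (-lam * x) * Real.exp (-s * x) with hD_def
  set F : ℕ → ℝ → ℝ := fun k u =>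
    (a ^ (k + 1) / ((Nat.factorial k : ℝ) * (Nat.factorial (k + 1) : ℝ)) * D) *
      (u ^ k * Real.exp (-(c * u))) with hF_def
  -- step 1: substitution
  have hsub : (∫ t in Ioi x,
      Real.sqrt (a / (t - x)) * besselI1 (2 * Real.sqrt (a * (t - x)))
        * Real.exp (-lam * x) * Real.exp (-mu * (t - x)) * Real.exp (-s * t))
      = ∫ u in Ioi (0:ℝ),
      Real.sqrt (a / u) * besselI1 (2 * Real.sqrt (a * u))
        * Real.exp (-lam * x) * Real.exp (-mu * u) * Real.exp (-s * (u + x)) := by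
    have h1 : MeasurePreserving (fun u : ℝ => u + x) volume volume :=
      measurePreserving_add_right volume x
    have h2 : MeasurableEmbedding (fun u : ℝ => u + x) :=
      (Homeomorph.addRight x).measurableEmbedding
    have h3 := h1.setIntegral_preimage_emb h2 (fun t =>
      Real.sqrt (a / (t - x)) * besselI1 (2 * Real.sqrt (a * (t - x)))
        * Real.exp (-lam * x) * Real.exp (-mu * (t - x)) * Real.exp (-s * t)) (Ioi x)
    rw [show (fun u : ℝ => u + x) ⁻¹' Ioi x = Ioi 0 by ext u; simp] at h3
    rw [← h3]
    simp only [add_sub_cancel_right]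
  -- step 2: pointwise series
  have hpt : ∀ u ∈ Ioi (0:ℝ),
      Real.sqrt (a / u) * besselI1 (2 * Real.sqrt (a * u))
        * Real.exp (-lam * x) * Real.exp (-mu * u) * Real.exp (-s * (u + x))
      = ∑' k : ℕ, F k u := by
    intro u hu
    rw [series_eq a u ha hu, ← tsum_mul_right, ← tsum_mul_right, ← tsum_mul_right]
    congr 1; funext k
    have hexp : Real.exp (-mu * u) * Real.exp (-s * (u + x)) =
        Real.exp (-s * x) * Real.exp (-(c * u)) := by
      rw [← Real.exp_add, ← Real.exp_add]; congr 1; rw [hc_def]; ring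
    rw [hF_def, hD_def]
    simp only
    rw [mul_assoc (_ * Real.exp (-lam * x)), hexp]
    ring
  -- step 3: integrability of each term
  have hint : ∀ k : ℕ, IntegrableOn (F k) (Ioi 0) := fun k =>
    (pow_exp_integrable k c hc).const_mul _
  -- value of each integral
  have hval : ∀ k : ℕ, ∫ u in Ioi (0:ℝ), F k u = D * ((a / c) ^ (k + 1) / (Nat.factorial (k+1) : ℝ)) := by
    intro k
    rw [hF_def]
    simp only
    rw [MeasureTheory.integral_const_mul, pow_exp_integral k c hc]
    have hk : (Nat.factorial k : ℝ) ≠ 0 := Nat.cast_ne_zero.mpr k.factorial_ne_zero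
    have hk1 : (Nat.factorial (k+1) : ℝ) ≠ 0 := Nat.cast_ne_zero.mpr (k+1).factorial_ne_zero
    rw [div_pow, one_pow, div_pow]
    field_simp
  -- norms
  have hnorm : ∀ k : ℕ, ∫ u in Ioi (0:ℝ), ‖F k u‖ = ∫ u in Ioi (0:ℝ), F k u := by
    intro k
    refine setIntegral_congr_fun measurableSet_Ioi (fun u hu => ?_)
    rw [Real.norm_of_nonneg]
    rw [hF_def]
    have : (0:ℝ) < u := hu
    positivity
  -- summability
  have hsummand : Summable (fun k : ℕ => D * ((a / c) ^ (k + 1) / (Nat.factorial (k+1) : ℝ))) := by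
    apply Summable.mul_left
    exact ((Real.summable_pow_div_factorial (a / c)).comp_injective Nat.succ_injective)
  have hsum : Summable (fun k : ℕ => ∫ u in Ioi (0:ℝ), ‖F k u‖) := by
    refine (summable_congr (fun k => ?_)).mpr hsummand
    rw [hnorm k, hval k]
  -- swap
  have hswap := MeasureTheory.integral_tsum_of_summable_integral_norm hint hsum
  -- conclude
  rw [hsub, setIntegral_congr_fun measurableSet_Ioi hpt, ← hswap]
  have : ∑' k : ℕ, ∫ u in Ioi (0:ℝ), F k u = D * (Real.exp (a / c) - 1) := by
    rw [tsum_congr hval, tsum_mul_left, exp_tail]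
  rw [this, hD_def, ← Real.exp_add, mul_sub, mul_one,
    show -lam * x + -s * x = -(lam + s) * x by ring, sub_add_cancel,
    show a / c = lam * mu * x / (s + mu) by rw [ha_def, hc_def]; ring,
    show -(lam + s) * x = -x * (s + lam) by ring]
end

section
/- For a ≥ 0, s > 0 and k ≥ 0, ∫_k^∞ e^{-s t} e^{-(a/2) t} I₀((a/2)√(t² − k²)) dt = e^{-k√(s(s+a))} / √(s(s+a)). -/
open MeasureTheory Real Filter Set Topology

namespace B91


noncomputable def fB (b y : ℝ) : ℝ :=
  ∑' j : ℕ, (b / 2) ^ (2 * j) * y ^ j / ((Nat.factorial j : ℝ)) ^ 2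

noncomputable def gB (b y : ℝ) : ℝ :=
  ∑' j : ℕ, (b / 2) ^ (2 * j + 1) * y ^ (j + 1)
      / ((Nat.factorial j : ℝ) * (Nat.factorial (j + 1) : ℝ))

lemma fact_pos (j : ℕ) : (0 : ℝ) < (Nat.factorial j : ℝ) := by
  exact_mod_cast j.factorial_pos

lemma one_le_fact (j : ℕ) : (1 : ℝ) ≤ (Nat.factorial j : ℝ) := by
  exact_mod_cast j.factorial_pos

lemma fact_even_bound (j : ℕ) :
    ((Nat.factorial (2 * j) : ℝ)) ≤ 4 ^ j * (Nat.factorial j : ℝ) ^ 2 := by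
  have h1 : (2 * j).choose j ≤ 4 ^ j :=
    le_trans (Nat.choose_le_choose j (by omega : 2 * j ≤ 2 * j + 1)) (Nat.choose_middle_le_pow j)
  have h2 : (2 * j).choose j * j.factorial * j.factorial = (2 * j).factorial := by
    have := Nat.choose_mul_factorial_mul_factorial (show j ≤ 2 * j by omega)
    simpa [show 2 * j - j = j by omega] using this
  have : (2*j).factorial ≤ 4 ^ j * (j.factorial * j.factorial) :=
    h2 ▸ (by nlinarith [j.factorial_pos, h1] : (2*j).choose j * j.factorial * j.factorial ≤ 4 ^ j * (j.factorial * j.factorial))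
  calc ((Nat.factorial (2*j) : ℝ)) ≤ ((4 ^ j * (j.factorial * j.factorial) : ℕ) : ℝ) := by
        exact_mod_cast this
    _ = 4 ^ j * (Nat.factorial j : ℝ) ^ 2 := by push_cast; ring

lemma fact_odd_bound (j : ℕ) :
    ((Nat.factorial (2 * j + 1) : ℝ)) ≤
      2 ^ (2 * j + 1) * ((Nat.factorial j : ℝ) * (Nat.factorial (j + 1) : ℝ)) := by
  have h1 : (2 * j + 1).choose j ≤ 4 ^ j := Nat.choose_middle_le_pow j
  have h2 : (2 * j + 1).choose j * j.factorial * (j + 1).factorial = (2 * j + 1).factorial := by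
    have := Nat.choose_mul_factorial_mul_factorial (show j ≤ 2 * j + 1 by omega)
    simpa [show 2 * j + 1 - j = j + 1 by omega] using this
  have h3 : (2 * j + 1).factorial ≤ 4 ^ j * (j.factorial * (j + 1).factorial) := by
    calc (2*j+1).factorial = (2*j+1).choose j * j.factorial * (j+1).factorial := h2.symm
      _ ≤ 4 ^ j * j.factorial * (j+1).factorial :=
          Nat.mul_le_mul_right _ (Nat.mul_le_mul_right _ h1)
      _ = 4 ^ j * (j.factorial * (j+1).factorial) := by ring
  have h4 : (4 : ℝ) ^ j ≤ 2 ^ (2 * j + 1) := by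
    rw [show (4:ℝ) = 2 ^ 2 by norm_num, ← pow_mul]
    exact pow_le_pow_right₀ (by norm_num) (by omega)
  calc ((Nat.factorial (2*j+1) : ℝ)) ≤ ((4 ^ j * (j.factorial * (j+1).factorial) : ℕ) : ℝ) := by
        exact_mod_cast h3
    _ = 4 ^ j * ((Nat.factorial j : ℝ) * (Nat.factorial (j+1) : ℝ)) := by push_cast; ring
    _ ≤ 2 ^ (2*j+1) * ((Nat.factorial j : ℝ) * (Nat.factorial (j+1) : ℝ)) := by
        apply mul_le_mul_of_nonneg_right h4
        positivity

lemma summable_bound {f : ℕ → ℝ} (C x : ℝ)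
    (h : ∀ j, |f j| ≤ C * (x ^ j / (Nat.factorial j : ℝ))) : Summable f :=
  Summable.of_norm_bounded ((Real.summable_pow_div_factorial x).mul_left C) h

lemma real_exp_tsum (x : ℝ) : Real.exp x = ∑' n : ℕ, x ^ n / (Nat.factorial n : ℝ) := by
  rw [Real.exp_eq_exp_ℝ, NormedSpace.exp_eq_tsum_div]

/-- master comparison with exp series along an injection. -/
lemma tsum_abs_le_mul_exp {f : ℕ → ℝ} {C x : ℝ} (hC : 0 ≤ C) (hx : 0 ≤ x)
    (e : ℕ → ℕ) (he : Function.Injective e)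
    (hb : ∀ j, |f j| ≤ C * (x ^ (e j) / (Nat.factorial (e j) : ℝ))) :
    |∑' j, f j| ≤ C * Real.exp x := by
  have hexp : Summable (fun n : ℕ => x ^ n / (Nat.factorial n : ℝ)) :=
    Real.summable_pow_div_factorial x
  have hg : Summable (fun n : ℕ => C * (x ^ n / (Nat.factorial n : ℝ))) := hexp.mul_left C
  have hfe : Summable (fun j => C * (x ^ (e j) / (Nat.factorial (e j) : ℝ))) :=
    ((hexp.comp_injective he).mul_left C)
  have habs : Summable (fun j => |f j|) :=
    Summable.of_nonneg_of_le (fun _ => abs_nonneg _) hb hfe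
  have hf : Summable f := habs.of_abs
  have habs' : Summable (fun j => ‖f j‖) := by simpa [Real.norm_eq_abs] using habs
  have h0 : |∑' j, f j| ≤ ∑' j, |f j| := by
    simpa [Real.norm_eq_abs] using norm_tsum_le_tsum_norm habs'
  calc |∑' j, f j| ≤ ∑' j, |f j| := h0
    _ ≤ ∑' n, C * (x ^ n / (Nat.factorial n : ℝ)) := by
        refine Summable.tsum_le_tsum_of_inj e he (fun c _ => by positivity) hb habs hg
    _ = C * Real.exp x := by rw [tsum_mul_left, ← real_exp_tsum]



lemma abs_term_f (b y : ℝ) (j : ℕ) :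
    |(b / 2) ^ (2 * j) * y ^ j / ((Nat.factorial j : ℝ)) ^ 2|
      = ((b / 2) ^ 2 * |y|) ^ j / ((Nat.factorial j : ℝ)) ^ 2 := by
  rw [abs_div, abs_of_nonneg (by positivity : (0:ℝ) ≤ ((Nat.factorial j : ℝ)) ^ 2), abs_mul,
    abs_pow, abs_pow, pow_mul, sq_abs, mul_pow]

lemma abs_term_g (b y : ℝ) (j : ℕ) :
    |(b / 2) ^ (2 * j + 1) * y ^ (j + 1)
        / ((Nat.factorial j : ℝ) * (Nat.factorial (j + 1) : ℝ))|
      = |b / 2| ^ (2 * j + 1) * |y| ^ (j + 1)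
        / ((Nat.factorial j : ℝ) * (Nat.factorial (j + 1) : ℝ)) := by
  rw [abs_div, abs_of_nonneg (by positivity :
      (0:ℝ) ≤ (Nat.factorial j : ℝ) * (Nat.factorial (j + 1) : ℝ)), abs_mul, abs_pow, abs_pow]

lemma summable_fB (b y : ℝ) :
    Summable (fun j : ℕ => (b / 2) ^ (2 * j) * y ^ j / ((Nat.factorial j : ℝ)) ^ 2) := by
  apply summable_bound 1 ((b / 2) ^ 2 * |y|)
  intro j
  rw [abs_term_f, one_mul]
  apply div_le_div_of_nonneg_left (by positivity) (fact_pos j)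
  nlinarith [one_le_fact j]

lemma summable_gB (b y : ℝ) :
    Summable (fun j : ℕ => (b / 2) ^ (2 * j + 1) * y ^ (j + 1)
      / ((Nat.factorial j : ℝ) * (Nat.factorial (j + 1) : ℝ))) := by
  apply summable_bound (|b / 2| * |y|) ((b / 2) ^ 2 * |y|)
  intro j
  rw [abs_term_g]
  have h1 : |b / 2| ^ (2 * j + 1) * |y| ^ (j + 1)
      = (|b / 2| * |y|) * (((b / 2) ^ 2 * |y|) ^ j) := by
    rw [pow_succ, pow_succ, pow_mul, sq_abs, mul_pow]; ring
  rw [h1, mul_div_assoc]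
  apply mul_le_mul_of_nonneg_left _ (by positivity)
  apply div_le_div_of_nonneg_left (by positivity) (fact_pos j)
  nlinarith [one_le_fact (j+1), fact_pos j]

lemma abs_fB_le (b y : ℝ) (hy : 0 ≤ y) :
    |fB b y| ≤ Real.exp (|b| * Real.sqrt y) := by
  have hx : 0 ≤ |b| * Real.sqrt y := by positivity
  have := tsum_abs_le_mul_exp (f := fun j : ℕ =>
      (b / 2) ^ (2 * j) * y ^ j / ((Nat.factorial j : ℝ)) ^ 2)
      (C := 1) (x := |b| * Real.sqrt y) zero_le_one hx (fun j => 2 * j)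
      (fun i i' h => by dsimp only at h; omega) ?_
  · simpa [fB] using this
  intro j
  rw [abs_term_f, one_mul]
  have key : (|b| * Real.sqrt y) ^ (2 * j) = (b ^ 2 * y) ^ j := by
    rw [pow_mul, mul_pow, sq_abs, Real.sq_sqrt hy]
  rw [key]
  have hz : (0:ℝ) ≤ b ^ 2 * y := by positivity
  have h2 : ((b / 2) ^ 2 * |y|) ^ j = (b ^ 2 * y) ^ j / 4 ^ j := by
    rw [abs_of_nonneg hy, ← div_pow]; congr 1; ring
  rw [h2, div_div]
  apply div_le_div_of_nonneg_left (by positivity) (fact_pos _)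
  calc (Nat.factorial (2*j) : ℝ) ≤ 4 ^ j * (Nat.factorial j : ℝ) ^ 2 := fact_even_bound j
    _ = 4 ^ j * (Nat.factorial j : ℝ) ^ 2 := rfl

lemma abs_gB_le (b y : ℝ) (hy : 0 ≤ y) :
    |gB b y| ≤ Real.sqrt y * Real.exp (|b| * Real.sqrt y) := by
  have hx : 0 ≤ |b| * Real.sqrt y := by positivity
  have := tsum_abs_le_mul_exp (f := fun j : ℕ =>
      (b / 2) ^ (2 * j + 1) * y ^ (j + 1)
        / ((Nat.factorial j : ℝ) * (Nat.factorial (j + 1) : ℝ)))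
      (C := Real.sqrt y) (x := |b| * Real.sqrt y) (Real.sqrt_nonneg y) hx
      (fun j => 2 * j + 1) (fun i i' h => by dsimp only at h; omega) ?_
  · simpa [gB] using this
  intro j
  rw [abs_term_g, abs_of_nonneg hy]
  have key : Real.sqrt y * (|b| * Real.sqrt y) ^ (2 * j + 1)
      = |b| ^ (2 * j + 1) * y ^ (j + 1) := by
    have hs : Real.sqrt y ^ (2 * (j + 1)) = y ^ (j + 1) := by
      rw [pow_mul, Real.sq_sqrt hy]
    calc Real.sqrt y * (|b| * Real.sqrt y) ^ (2*j+1)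
        = |b| ^ (2*j+1) * (Real.sqrt y ^ (2*(j+1))) := by
          rw [mul_pow, show 2*(j+1) = (2*j+1)+1 by ring, pow_succ]; ring
      _ = |b| ^ (2*j+1) * y ^ (j+1) := by rw [hs]
  rw [mul_div_assoc', key]
  have h2 : |b / 2| ^ (2 * j + 1) = |b| ^ (2 * j + 1) / 2 ^ (2 * j + 1) := by
    rw [abs_div, ← div_pow]; norm_num
  rw [h2, div_mul_eq_mul_div, div_div]
  have hgoal : |b| ^ (2*j+1) * y ^ (j+1) / (2 ^ (2*j+1) * ((Nat.factorial j : ℝ) * (Nat.factorial (j+1) : ℝ)))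
      ≤ |b| ^ (2*j+1) * y ^ (j+1) / (Nat.factorial (2*j+1) : ℝ) := by
    apply div_le_div_of_nonneg_left _ (fact_pos _) (fact_odd_bound j)
    have : (0:ℝ) ≤ y ^ (j+1) := by positivity
    positivity
  exact hgoal

lemma gB_zero (b : ℝ) : gB b 0 = 0 := by
  simp [gB]

lemma fB_zero_left (y : ℝ) : fB 0 y = 1 := by
  rw [fB, tsum_eq_single 0]
  · simp
  · intro j hj
    have : (0:ℝ) / 2 = 0 := by norm_num
    rw [this, zero_pow (by omega : 2 * j ≠ 0)]
    simp



lemma ball_facts (y : ℝ) : y ∈ Metric.ball (0:ℝ) (|y| + 1) := by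
  rw [Metric.mem_ball, Real.dist_eq, sub_zero]
  linarith [abs_nonneg y]

lemma mem_ball_abs {z y : ℝ} (hz : z ∈ Metric.ball (0:ℝ) (|y| + 1)) : |z| ≤ |y| + 1 := by
  simp [Real.dist_eq] at hz
  linarith

/-- derivative of `gB b` in the second variable -/
lemma hasDerivAt_gB (b y : ℝ) : HasDerivAt (gB b) (b / 2 * fB b y) y := by
  set R := |y| + 1 with hR
  have hR1 : (1:ℝ) ≤ R := by rw [hR]; linarith [abs_nonneg y]
  have hR0 : (0:ℝ) ≤ R := by linarith
  have key := hasDerivAt_tsum_of_isPreconnected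
    (u := fun j : ℕ => (|b| / 2) ^ (2 * j + 1) * R ^ j / ((Nat.factorial j : ℝ)) ^ 2)
    (g := fun (j : ℕ) (z : ℝ) => (b / 2) ^ (2 * j + 1) * z ^ (j + 1)
      / ((Nat.factorial j : ℝ) * (Nat.factorial (j + 1) : ℝ)))
    (g' := fun (j : ℕ) (z : ℝ) => (b / 2) ^ (2 * j + 1) * ((j + 1 : ℕ) * z ^ j)
      / ((Nat.factorial j : ℝ) * (Nat.factorial (j + 1) : ℝ)))
    (t := Metric.ball (0:ℝ) R) (y₀ := y) (y := y)
    ?_ Metric.isOpen_ball (convex_ball (0:ℝ) R).isPreconnected ?_ ?_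
    (ball_facts y) (summable_gB b y) (ball_facts y)
  · refine key.congr_deriv ?_
    symm
    rw [fB, ← tsum_mul_left]
    apply tsum_congr
    intro j
    show b / 2 * ((b / 2) ^ (2 * j) * y ^ j / ((Nat.factorial j : ℝ)) ^ 2)
        = (b / 2) ^ (2 * j + 1) * (((j + 1 : ℕ) : ℝ) * y ^ j)
          / ((Nat.factorial j : ℝ) * (Nat.factorial (j + 1) : ℝ))
    have hf : ((Nat.factorial (j+1) : ℝ)) = ((j:ℝ) + 1) * (Nat.factorial j : ℝ) := by
      push_cast [Nat.factorial_succ]; ring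
    have hj0 : ((j:ℝ) + 1) ≠ 0 := by positivity
    have hfj : (Nat.factorial j : ℝ) ≠ 0 := (fact_pos j).ne'
    rw [pow_succ (b/2) (2*j), hf]
    push_cast
    field_simp
  · -- summability of u
    apply summable_bound (|b| / 2) ((|b| / 2) ^ 2 * R)
    intro j
    have h1 : |(|b| / 2) ^ (2 * j + 1) * R ^ j / ((Nat.factorial j : ℝ)) ^ 2|
        = (|b| / 2) ^ (2 * j + 1) * R ^ j / ((Nat.factorial j : ℝ)) ^ 2 := by
      apply abs_of_nonneg; positivity
    rw [h1, pow_succ, pow_mul]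
    rw [show ((|b|/2) ^ 2) ^ j * (|b|/2) * R ^ j = (|b|/2) * (((|b|/2) ^ 2 * R) ^ j) by
      rw [mul_pow]; ring, mul_div_assoc]
    apply mul_le_mul_of_nonneg_left _ (by positivity)
    apply div_le_div_of_nonneg_left (by positivity) (fact_pos j)
    nlinarith [one_le_fact j, fact_pos j]
  · -- termwise derivative
    intro j z _
    have h := (((hasDerivAt_pow (j+1) z).const_mul ((b / 2) ^ (2 * j + 1))).div_const
      ((Nat.factorial j : ℝ) * (Nat.factorial (j + 1) : ℝ)))
    simpa using h
  · -- bound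
    intro j z hz
    have hz' : |z| ≤ R := mem_ball_abs hz
    have h1 : ‖(b / 2) ^ (2 * j + 1) * ((j + 1 : ℕ) * z ^ j)
        / ((Nat.factorial j : ℝ) * (Nat.factorial (j + 1) : ℝ))‖
        = (|b| / 2) ^ (2 * j + 1) * ((j + 1 : ℕ) * |z| ^ j)
          / ((Nat.factorial j : ℝ) * (Nat.factorial (j + 1) : ℝ)) := by
      rw [Real.norm_eq_abs, abs_div, abs_mul, abs_mul, abs_pow, abs_pow,
        abs_of_nonneg (by positivity : (0:ℝ) ≤ (Nat.factorial j : ℝ) * (Nat.factorial (j+1) : ℝ)),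
        Nat.abs_cast, abs_div]
      norm_num
    rw [h1]
    have hf : ((Nat.factorial (j+1) : ℝ)) = (j + 1 : ℕ) * (Nat.factorial j : ℝ) := by
      exact_mod_cast Nat.factorial_succ j
    have h2 : (|b| / 2) ^ (2 * j + 1) * ((j + 1 : ℕ) * |z| ^ j)
          / ((Nat.factorial j : ℝ) * (Nat.factorial (j + 1) : ℝ))
        = (|b| / 2) ^ (2 * j + 1) * |z| ^ j / ((Nat.factorial j : ℝ)) ^ 2 := by
      rw [hf]
      have hj0 : ((j + 1 : ℕ) : ℝ) ≠ 0 := by positivity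
      have hfj : (Nat.factorial j : ℝ) ≠ 0 := (fact_pos j).ne'
      field_simp
    rw [h2]
    apply div_le_div_of_nonneg_right _ (by positivity)
    · apply mul_le_mul_of_nonneg_left _ (by positivity)
      exact pow_le_pow_left₀ (abs_nonneg z) hz' j
    
lemma continuous_gB (b : ℝ) : Continuous (gB b) := by
  rw [continuous_iff_continuousAt]
  exact fun y => (hasDerivAt_gB b y).continuousAt



lemma cast_le_two_pow (j : ℕ) : (j : ℝ) ≤ 2 ^ j := by
  calc (j : ℝ) ≤ ((2 ^ j : ℕ) : ℝ) := by exact_mod_cast (Nat.lt_two_pow_self (n := j)).le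
    _ = 2 ^ j := by push_cast; ring

lemma hasDerivAt_fB_y (b y : ℝ) :
    HasDerivAt (fB b)
      (∑' j : ℕ, (b / 2) ^ (2 * j) * ((j:ℕ) * y ^ (j - 1)) / ((Nat.factorial j : ℝ)) ^ 2) y := by
  set R := |y| + 1 with hR
  have hR1 : (1:ℝ) ≤ R := by rw [hR]; linarith [abs_nonneg y]
  have key := hasDerivAt_tsum_of_isPreconnected
    (u := fun j : ℕ => ((|b| / 2) ^ 2) ^ j * ((j:ℝ) * R ^ (j - 1)) / ((Nat.factorial j : ℝ)) ^ 2)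
    (g := fun (j : ℕ) (z : ℝ) => (b / 2) ^ (2 * j) * z ^ j / ((Nat.factorial j : ℝ)) ^ 2)
    (g' := fun (j : ℕ) (z : ℝ) => (b / 2) ^ (2 * j) * ((j:ℕ) * z ^ (j - 1))
      / ((Nat.factorial j : ℝ)) ^ 2)
    (t := Metric.ball (0:ℝ) R) (y₀ := y) (y := y)
    ?_ Metric.isOpen_ball (convex_ball (0:ℝ) R).isPreconnected ?_ ?_
    (ball_facts y) (summable_fB b y) (ball_facts y)
  · exact key
  · -- summability of u
    apply summable_bound 1 (2 * ((|b| / 2) ^ 2 * R))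
    intro j
    have hnn : (0:ℝ) ≤ ((|b| / 2) ^ 2) ^ j * ((j:ℝ) * R ^ (j - 1)) := by positivity
    rw [abs_of_nonneg (by positivity), one_mul]
    have hnum : ((|b| / 2) ^ 2) ^ j * ((j:ℝ) * R ^ (j - 1))
        ≤ ((|b| / 2) ^ 2) ^ j * (2 ^ j * R ^ j) := by
      apply mul_le_mul_of_nonneg_left _ (by positivity)
      apply mul_le_mul (cast_le_two_pow j) (pow_le_pow_right₀ hR1 (by omega)) (by positivity)
        (by positivity)
    calc ((|b| / 2) ^ 2) ^ j * ((j:ℝ) * R ^ (j - 1)) / ((Nat.factorial j : ℝ)) ^ 2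
        ≤ ((|b| / 2) ^ 2) ^ j * (2 ^ j * R ^ j) / (Nat.factorial j : ℝ) := by
          apply div_le_div₀ (by positivity) hnum (fact_pos j)
          nlinarith [one_le_fact j, fact_pos j]
      _ = (2 * ((|b| / 2) ^ 2 * R)) ^ j / (Nat.factorial j : ℝ) := by
          rw [mul_pow, mul_pow]; ring
  · intro j z _
    have h := ((hasDerivAt_pow j z).const_mul ((b / 2) ^ (2 * j))).div_const
      ((Nat.factorial j : ℝ)) -- wrong denominator; fix below
    exact (((hasDerivAt_pow j z).const_mul ((b / 2) ^ (2 * j))).div_const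
      (((Nat.factorial j : ℝ)) ^ 2))
  · intro j z hz
    have hz' : |z| ≤ R := mem_ball_abs hz
    have h1 : ‖(b / 2) ^ (2 * j) * ((j:ℕ) * z ^ (j-1)) / ((Nat.factorial j : ℝ)) ^ 2‖
        = ((|b| / 2) ^ 2) ^ j * ((j:ℝ) * |z| ^ (j-1)) / ((Nat.factorial j : ℝ)) ^ 2 := by
      rw [Real.norm_eq_abs, abs_div, abs_mul, abs_mul, abs_pow, abs_pow,
        abs_of_nonneg (by positivity : (0:ℝ) ≤ ((Nat.factorial j : ℝ)) ^ 2),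
        Nat.abs_cast, abs_div, pow_mul]
      norm_num
    rw [h1]
    apply div_le_div_of_nonneg_right _ (by positivity)
    apply mul_le_mul_of_nonneg_left _ (by positivity)
    apply mul_le_mul_of_nonneg_left _ (by positivity)
    exact pow_le_pow_left₀ (abs_nonneg z) hz' (j - 1)

lemma continuous_fB (b : ℝ) : Continuous (fB b) := by
  rw [continuous_iff_continuousAt]
  exact fun y => (hasDerivAt_fB_y b y).continuousAt

lemma hasDerivAt_fB_b (y b : ℝ) :
    HasDerivAt (fun β => fB β y) (gB b y) b := by
  set M := |b| + 1 with hM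
  have hM1 : (1:ℝ) ≤ M := by rw [hM]; linarith [abs_nonneg b]
  have hderiv : ∀ (j : ℕ) (β : ℝ), HasDerivAt (fun β : ℝ => (β / 2) ^ (2 * j) * y ^ j
      / ((Nat.factorial j : ℝ)) ^ 2)
      ((2 * j : ℕ) * (β / 2) ^ (2 * j - 1) * (1 / 2) * y ^ j / ((Nat.factorial j : ℝ)) ^ 2) β := by
    intro j β
    have h1 : HasDerivAt (fun β : ℝ => β / 2) (1 / 2) β := by
      simpa using (hasDerivAt_id β).div_const 2
    have h2 := (hasDerivAt_pow (2 * j) (β / 2)).comp β h1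
    exact (h2.mul_const (y ^ j)).div_const (((Nat.factorial j : ℝ)) ^ 2)
  have hbound : ∀ (j : ℕ) (β : ℝ), |β| ≤ M →
      ‖(2 * j : ℕ) * (β / 2) ^ (2 * j - 1) * (1 / 2) * y ^ j / ((Nat.factorial j : ℝ)) ^ 2‖
      ≤ (2 * j : ℕ) * (M / 2) ^ (2 * j - 1) * (1 / 2) * |y| ^ j
        / ((Nat.factorial j : ℝ)) ^ 2 := by
    intro j β hβ
    have h1 : ‖(2 * j : ℕ) * (β / 2) ^ (2 * j - 1) * (1 / 2) * y ^ j
        / ((Nat.factorial j : ℝ)) ^ 2‖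
        = (2 * j : ℕ) * (|β| / 2) ^ (2 * j - 1) * (1 / 2) * |y| ^ j
          / ((Nat.factorial j : ℝ)) ^ 2 := by
      rw [Real.norm_eq_abs, abs_div, abs_mul, abs_mul, abs_mul, abs_pow, abs_pow,
        abs_of_nonneg (by positivity : (0:ℝ) ≤ ((Nat.factorial j : ℝ)) ^ 2),
        Nat.abs_cast, abs_div, abs_of_nonneg (by norm_num : (0:ℝ) ≤ 1/2)]
      norm_num
    rw [h1]
    apply div_le_div_of_nonneg_right _ (by positivity)
    apply mul_le_mul_of_nonneg_right _ (by positivity)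
    apply mul_le_mul_of_nonneg_right _ (by norm_num)
    apply mul_le_mul_of_nonneg_left _ (by positivity)
    apply pow_le_pow_left₀ (by positivity) (by linarith : |β| / 2 ≤ M / 2)
  have hu : Summable (fun j : ℕ => (2 * j : ℕ) * (M / 2) ^ (2 * j - 1) * (1 / 2) * |y| ^ j
      / ((Nat.factorial j : ℝ)) ^ 2) := by
    apply summable_bound 1 (2 * ((M / 2 + 1) ^ 2 * |y|))
    intro j
    rw [abs_of_nonneg (by positivity), one_mul]
    have hstep : ((2 * j : ℕ) : ℝ) * (M / 2) ^ (2 * j - 1) * (1 / 2) * |y| ^ j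
        ≤ 2 ^ j * ((M / 2 + 1) ^ 2) ^ j * |y| ^ j := by
      have e1 : ((2 * j : ℕ) : ℝ) * (1 / 2) = (j : ℝ) := by push_cast; ring
      have h2 : (M / 2) ^ (2 * j - 1) ≤ (M / 2 + 1) ^ (2 * j) := by
        calc (M / 2) ^ (2 * j - 1) ≤ (M / 2 + 1) ^ (2 * j - 1) :=
              pow_le_pow_left₀ (by linarith) (by linarith) _
          _ ≤ (M / 2 + 1) ^ (2 * j) := pow_le_pow_right₀ (by linarith) (by omega)
      calc ((2 * j : ℕ) : ℝ) * (M / 2) ^ (2 * j - 1) * (1 / 2) * |y| ^ j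
          = (j : ℝ) * (M / 2) ^ (2 * j - 1) * |y| ^ j := by push_cast; ring
        _ ≤ 2 ^ j * (M / 2 + 1) ^ (2 * j) * |y| ^ j := by
            apply mul_le_mul_of_nonneg_right _ (by positivity)
            exact mul_le_mul (cast_le_two_pow j) h2 (by positivity) (by positivity)
        _ = 2 ^ j * ((M / 2 + 1) ^ 2) ^ j * |y| ^ j := by rw [pow_mul]
    calc ((2 * j : ℕ) : ℝ) * (M / 2) ^ (2 * j - 1) * (1 / 2) * |y| ^ j
          / ((Nat.factorial j : ℝ)) ^ 2
        ≤ 2 ^ j * ((M / 2 + 1) ^ 2) ^ j * |y| ^ j / (Nat.factorial j : ℝ) := by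
          apply div_le_div₀ (by positivity) hstep (fact_pos j)
          nlinarith [one_le_fact j, fact_pos j]
      _ = (2 * ((M / 2 + 1) ^ 2 * |y|)) ^ j / (Nat.factorial j : ℝ) := by
          rw [mul_pow, mul_pow]; ring
  have key := hasDerivAt_tsum_of_isPreconnected
    (u := fun j : ℕ => (2 * j : ℕ) * (M / 2) ^ (2 * j - 1) * (1 / 2) * |y| ^ j
      / ((Nat.factorial j : ℝ)) ^ 2)
    (g := fun (j : ℕ) (β : ℝ) => (β / 2) ^ (2 * j) * y ^ j / ((Nat.factorial j : ℝ)) ^ 2)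
    (g' := fun (j : ℕ) (β : ℝ) => (2 * j : ℕ) * (β / 2) ^ (2 * j - 1) * (1 / 2) * y ^ j
      / ((Nat.factorial j : ℝ)) ^ 2)
    (t := Metric.ball (0:ℝ) M) (y₀ := b) (y := b)
    hu Metric.isOpen_ball (convex_ball (0:ℝ) M).isPreconnected
    (fun j β _ => hderiv j β)
    (fun j β hβ => hbound j β (mem_ball_abs hβ))
    (ball_facts b) (summable_fB b y) (ball_facts b)
  have htsum : (∑' j : ℕ, (2 * j : ℕ) * (b / 2) ^ (2 * j - 1) * (1 / 2) * y ^ j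
      / ((Nat.factorial j : ℝ)) ^ 2) = gB b y := by
    have hsum : Summable (fun j : ℕ => ((2 * j : ℕ) : ℝ) * (b / 2) ^ (2 * j - 1) * (1 / 2) * y ^ j
        / ((Nat.factorial j : ℝ)) ^ 2) := by
      apply Summable.of_norm_bounded hu
      intro j
      exact hbound j b (by rw [hM]; linarith [abs_nonneg b])
    rw [hsum.tsum_eq_zero_add]
    have h0 : ((2 * 0 : ℕ) : ℝ) * (b / 2) ^ (2 * 0 - 1) * (1 / 2) * y ^ 0
        / ((Nat.factorial 0 : ℝ)) ^ 2 = 0 := by norm_num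
    rw [h0, zero_add, gB]
    apply tsum_congr
    intro j
    have e1 : 2 * (j + 1) - 1 = 2 * j + 1 := by omega
    have hf : ((Nat.factorial (j+1) : ℝ)) = ((j:ℝ) + 1) * (Nat.factorial j : ℝ) := by
      push_cast [Nat.factorial_succ]; ring
    have hfj : (Nat.factorial j : ℝ) ≠ 0 := (fact_pos j).ne'
    have hj0 : ((j:ℝ) + 1) ≠ 0 := by positivity
    rw [e1, hf]
    push_cast
    field_simp
  rw [← htsum]
  exact key



/-! ### integral machinery -/

lemma tendsto_poly_exp (n : ℕ) {δ : ℝ} (hδ : 0 < δ) :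
    Tendsto (fun t : ℝ => t ^ n * Real.exp (-δ * t)) atTop (𝓝 0) := by
  have h1 : Tendsto (fun t : ℝ => δ * t) atTop atTop :=
    Tendsto.const_mul_atTop hδ tendsto_id
  have h2 := (tendsto_pow_mul_exp_neg_atTop_nhds_zero n).comp h1
  have h3 : Tendsto (fun t : ℝ => (δ : ℝ)⁻¹ ^ n * ((δ * t) ^ n * Real.exp (-(δ * t)))) atTop
      (𝓝 ((δ:ℝ)⁻¹ ^ n * 0)) := h2.const_mul _
  rw [mul_zero] at h3
  convert h3 using 2 with t
  rw [mul_pow]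
  rw [show -δ * t = -(δ * t) by ring]
  field_simp
  ring
  rw [mul_assoc, ← mul_pow, mul_inv_cancel₀ hδ.ne', one_pow, mul_one]

lemma integrableOn_exp_poly {k δ : ℝ} (hδ : 0 < δ) (C : ℝ) (n : ℕ) {f : ℝ → ℝ}
    (hf : ContinuousOn f (Ici k)) (hb : ∀ t, k ≤ t → |f t| ≤ C * (t ^ n * Real.exp (-δ * t))) :
    IntegrableOn f (Ioi k) := by
  apply integrable_of_isBigO_exp_neg (half_pos hδ) hf
  rw [Asymptotics.isBigO_iff]
  refine ⟨1, ?_⟩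
  have h1 : Tendsto (fun t : ℝ => C * (t ^ n * Real.exp (-(δ/2) * t))) atTop (𝓝 0) := by
    have := (tendsto_poly_exp n (half_pos hδ)).const_mul C
    simpa using this
  have h2 : ∀ᶠ t in atTop, C * (t ^ n * Real.exp (-(δ/2) * t)) ≤ 1 :=
    h1.eventually_le_const (by norm_num)
  filter_upwards [h2, eventually_ge_atTop k] with t ht htk
  have hsplit : Real.exp (-δ * t) = Real.exp (-(δ/2) * t) * Real.exp (-(δ/2) * t) := by
    rw [← Real.exp_add]; congr 1; ring
  have := hb t htk
  rw [hsplit] at this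
  calc ‖f t‖ = |f t| := rfl
    _ ≤ C * (t ^ n * (Real.exp (-(δ/2) * t) * Real.exp (-(δ/2) * t))) := this
    _ = (C * (t ^ n * Real.exp (-(δ/2) * t))) * Real.exp (-(δ/2) * t) := by ring
    _ ≤ 1 * Real.exp (-(δ/2) * t) := by
        apply mul_le_mul_of_nonneg_right ht (Real.exp_nonneg _)
    _ ≤ 1 * ‖Real.exp (-(δ/2) * t)‖ := by
        rw [Real.norm_eq_abs, abs_of_nonneg (Real.exp_nonneg _)]

section Main

variable {c k : ℝ}

noncomputable def PP (c b : ℝ) : ℝ := Real.sqrt (c ^ 2 + b ^ 2)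

lemma PP_pos (hc : 0 < c) (b : ℝ) : 0 < PP c b := by
  apply Real.sqrt_pos.mpr; nlinarith

lemma PP_sq (hc : 0 < c) (b : ℝ) : (PP c b) ^ 2 = c ^ 2 + b ^ 2 :=
  Real.sq_sqrt (by nlinarith)

lemma abs_lt_PP (hc : 0 < c) (b : ℝ) : |b| < PP c b := by
  rw [PP, show |b| = Real.sqrt (b ^ 2) by rw [Real.sqrt_sq_eq_abs]]
  apply Real.sqrt_lt_sqrt (by positivity)
  nlinarith

lemma hasDerivAt_PP (hc : 0 < c) (b : ℝ) : HasDerivAt (PP c) (b / PP c b) b := by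
  have hne : c ^ 2 + b ^ 2 ≠ 0 := by nlinarith
  have h : HasDerivAt (fun b : ℝ => c ^ 2 + b ^ 2) (2 * b) b := by
    simpa using ((hasDerivAt_pow 2 b).const_add (c ^ 2))
  have h2 := (Real.hasDerivAt_sqrt hne).comp b h
  refine h2.congr_deriv ?_
  symm
  rw [PP]
  have : Real.sqrt (c ^ 2 + b ^ 2) ≠ 0 := by
    apply ne_of_gt; apply Real.sqrt_pos.mpr; nlinarith
  field_simp

lemma y_nonneg {t : ℝ} (hk : 0 ≤ k) (ht : k ≤ t) : 0 ≤ t ^ 2 - k ^ 2 := by nlinarith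

lemma sqrt_y_le {t : ℝ} (hk : 0 ≤ k) (ht : k ≤ t) : Real.sqrt (t ^ 2 - k ^ 2) ≤ t := by
  have h0 : 0 ≤ t := le_trans hk ht
  calc Real.sqrt (t ^ 2 - k ^ 2) ≤ Real.sqrt (t ^ 2) := Real.sqrt_le_sqrt (by nlinarith)
    _ = t := by rw [Real.sqrt_sq h0]

lemma fB_exp_bound {t : ℝ} (b : ℝ) (hk : 0 ≤ k) (ht : k ≤ t) :
    |fB b (t ^ 2 - k ^ 2)| ≤ Real.exp (|b| * t) := by
  refine (abs_fB_le b _ (y_nonneg hk ht)).trans (Real.exp_le_exp.mpr ?_)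
  exact mul_le_mul_of_nonneg_left (sqrt_y_le hk ht) (abs_nonneg b)

lemma gB_exp_bound {t : ℝ} (b : ℝ) (hk : 0 ≤ k) (ht : k ≤ t) :
    |gB b (t ^ 2 - k ^ 2)| ≤ t * Real.exp (|b| * t) := by
  refine (abs_gB_le b _ (y_nonneg hk ht)).trans ?_
  apply mul_le_mul (sqrt_y_le hk ht)
    (Real.exp_le_exp.mpr (mul_le_mul_of_nonneg_left (sqrt_y_le hk ht) (abs_nonneg b)))
    (Real.exp_nonneg _) (le_trans hk ht)

/-- the `t`-derivative of `exp (-P t) * gB b (t²-k²)` -/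
lemma hasDerivAt_G (hc : 0 < c) (b t : ℝ) :
    HasDerivAt (fun t => Real.exp (-(PP c b) * t) * gB b (t ^ 2 - k ^ 2))
      (Real.exp (-(PP c b) * t)
        * (b * t * fB b (t ^ 2 - k ^ 2) - PP c b * gB b (t ^ 2 - k ^ 2))) t := by
  have h1 : HasDerivAt (fun t : ℝ => -(PP c b) * t) (-(PP c b)) t := by
    simpa using (hasDerivAt_id t).const_mul (-(PP c b))
  have hexp := h1.exp
  have h2 : HasDerivAt (fun t : ℝ => t ^ 2 - k ^ 2) (2 * t) t := by
    simpa using (hasDerivAt_pow 2 t).sub_const (k ^ 2)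
  have h3 := (hasDerivAt_gB b (t ^ 2 - k ^ 2)).comp t h2
  have h4 := hexp.mul h3
  refine h4.congr_deriv ?_
  symm
  simp only [Function.comp_apply]
  ring

lemma integral_G'_zero (hc : 0 < c) (hk : 0 ≤ k) (b : ℝ) :
    ∫ t in Ioi k, Real.exp (-(PP c b) * t)
      * (b * t * fB b (t ^ 2 - k ^ 2) - PP c b * gB b (t ^ 2 - k ^ 2)) = 0 := by
  set P := PP c b with hP
  have hPpos := PP_pos hc b
  have hPb := abs_lt_PP hc b
  set ε := P - |b| with hε
  have hεpos : 0 < ε := by rw [hε]; linarith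
  have hcontG' : Continuous (fun t => Real.exp (-P * t)
      * (b * t * fB b (t ^ 2 - k ^ 2) - P * gB b (t ^ 2 - k ^ 2))) := by
    apply Continuous.mul
    · exact (continuous_const.mul continuous_id).rexp
    · apply Continuous.sub
      · exact (continuous_const.mul continuous_id).mul
          ((continuous_fB b).comp ((continuous_pow 2).sub continuous_const))
      · exact continuous_const.mul
          ((continuous_gB b).comp ((continuous_pow 2).sub continuous_const))
  have hbound : ∀ t, k ≤ t → |Real.exp (-P * t)
      * (b * t * fB b (t ^ 2 - k ^ 2) - P * gB b (t ^ 2 - k ^ 2))|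
      ≤ (|b| + P) * (t ^ 1 * Real.exp (-ε * t)) := by
    intro t ht
    have h0 : 0 ≤ t := le_trans hk ht
    have hfb := fB_exp_bound (k := k) b hk ht
    have hgb := gB_exp_bound (k := k) b hk ht
    have hexp : Real.exp (-P * t) * Real.exp (|b| * t) = Real.exp (-ε * t) := by
      rw [← Real.exp_add]; congr 1; rw [hε]; ring
    rw [abs_mul, abs_of_nonneg (Real.exp_nonneg _)]
    calc Real.exp (-P * t) * |b * t * fB b (t ^ 2 - k ^ 2) - P * gB b (t ^ 2 - k ^ 2)|
        ≤ Real.exp (-P * t) * (|b| * t * Real.exp (|b| * t) + P * (t * Real.exp (|b| * t))) := by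
          apply mul_le_mul_of_nonneg_left _ (Real.exp_nonneg _)
          calc |b * t * fB b (t ^ 2 - k ^ 2) - P * gB b (t ^ 2 - k ^ 2)|
              ≤ |b * t * fB b (t ^ 2 - k ^ 2)| + |P * gB b (t ^ 2 - k ^ 2)| := abs_sub _ _
            _ ≤ |b| * t * Real.exp (|b| * t) + P * (t * Real.exp (|b| * t)) := by
                apply add_le_add
                · rw [abs_mul, abs_mul, abs_of_nonneg h0]
                  exact mul_le_mul_of_nonneg_left hfb (by positivity)
                · rw [abs_mul, abs_of_nonneg hPpos.le]
                  exact mul_le_mul_of_nonneg_left hgb hPpos.le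
      _ = (|b| + P) * (t ^ 1 * (Real.exp (-P * t) * Real.exp (|b| * t))) := by ring
      _ = (|b| + P) * (t ^ 1 * Real.exp (-ε * t)) := by rw [hexp]
  have hint : IntegrableOn (fun t => Real.exp (-P * t)
      * (b * t * fB b (t ^ 2 - k ^ 2) - P * gB b (t ^ 2 - k ^ 2))) (Ioi k) :=
    integrableOn_exp_poly hεpos (|b| + P) 1 hcontG'.continuousOn hbound
  have htend : Tendsto (fun t => Real.exp (-P * t) * gB b (t ^ 2 - k ^ 2)) atTop (𝓝 0) := by
    apply squeeze_zero_norm' _ (tendsto_poly_exp 1 hεpos)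
    filter_upwards [eventually_ge_atTop k] with t ht
    have hgb := gB_exp_bound (k := k) b hk ht
    have hexp : Real.exp (-P * t) * Real.exp (|b| * t) = Real.exp (-ε * t) := by
      rw [← Real.exp_add]; congr 1; rw [hε]; ring
    rw [Real.norm_eq_abs, abs_mul, abs_of_nonneg (Real.exp_nonneg _)]
    calc Real.exp (-P * t) * |gB b (t ^ 2 - k ^ 2)|
        ≤ Real.exp (-P * t) * (t * Real.exp (|b| * t)) :=
          mul_le_mul_of_nonneg_left hgb (Real.exp_nonneg _)
      _ = t ^ 1 * (Real.exp (-P * t) * Real.exp (|b| * t)) := by ring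
      _ = t ^ 1 * Real.exp (-ε * t) := by rw [hexp]
  have hFTC := integral_Ioi_of_hasDerivAt_of_tendsto
    (f := fun t => Real.exp (-P * t) * gB b (t ^ 2 - k ^ 2))
    (f' := fun t => Real.exp (-P * t)
      * (b * t * fB b (t ^ 2 - k ^ 2) - P * gB b (t ^ 2 - k ^ 2)))
    (a := k) (m := 0)
    (Continuous.continuousWithinAt (by
      exact ((continuous_const.mul continuous_id).rexp).mul
        ((continuous_gB b).comp ((continuous_pow 2).sub continuous_const))))
    (fun t _ => hasDerivAt_G hc b t) hint htend
  rw [hFTC]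
  simp [sub_self, gB_zero]

end Main


section Main
variable {c k : ℝ}

noncomputable def HH (c k b : ℝ) : ℝ :=
  ∫ t in Ioi k, Real.exp (-(PP c b) * t) * fB b (t ^ 2 - k ^ 2)

lemma hasDerivAt_Phi_b (hc : 0 < c) (t b : ℝ) :
    HasDerivAt (fun β => Real.exp (-(PP c β) * t) * fB β (t ^ 2 - k ^ 2))
      (Real.exp (-(PP c b) * t) * (-(b / PP c b) * t) * fB b (t ^ 2 - k ^ 2)
        + Real.exp (-(PP c b) * t) * gB b (t ^ 2 - k ^ 2)) b := by
  have hP := hasDerivAt_PP hc b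
  have h1 : HasDerivAt (fun β => -(PP c β) * t) (-(b / PP c b) * t) b := hP.neg.mul_const t
  have hexp := h1.exp
  have hf := hasDerivAt_fB_b (t ^ 2 - k ^ 2) b
  exact hexp.mul hf

lemma continuous_Phi (b : ℝ) :
    Continuous (fun t => Real.exp (-(PP c b) * t) * fB b (t ^ 2 - k ^ 2)) :=
  ((continuous_const.mul continuous_id).rexp).mul
    ((continuous_fB b).comp ((continuous_pow 2).sub continuous_const))

lemma hasDerivAt_HH (hc : 0 < c) (hk : 0 ≤ k) (b₀ : ℝ) :
    HasDerivAt (HH c k) 0 b₀ := by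
  set M := |b₀| + 1 with hM
  have hMpos : 0 < M := by rw [hM]; positivity
  set Pmax := Real.sqrt (c ^ 2 + M ^ 2) with hPmaxdef
  have hPmaxnn : 0 ≤ Pmax := Real.sqrt_nonneg _
  set ε₀ := c ^ 2 / (Pmax + M) with hε₀
  have hden : 0 < Pmax + M := by linarith
  have hε₀pos : 0 < ε₀ := by rw [hε₀]; positivity
  have hPle : ∀ b : ℝ, |b| ≤ M → PP c b ≤ Pmax := by
    intro b hb
    apply Real.sqrt_le_sqrt
    nlinarith [sq_abs b, abs_nonneg b]
  have hgap : ∀ b : ℝ, |b| ≤ M → ε₀ ≤ PP c b - |b| := by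
    intro b hb
    have h1 : (PP c b - |b|) * (PP c b + |b|) = c ^ 2 := by
      have := PP_sq hc b
      nlinarith [sq_abs b]
    have h2 := abs_lt_PP hc b
    have h3 := hPle b hb
    rw [hε₀, div_le_iff₀ hden]
    nlinarith [abs_nonneg b]
  have hballM : ∀ b ∈ Metric.ball b₀ 1, |b| ≤ M := by
    intro b hb
    rw [Metric.mem_ball, Real.dist_eq] at hb
    have := abs_sub_abs_le_abs_sub b b₀
    rw [hM]; linarith
  have key := hasDerivAt_integral_of_dominated_loc_of_deriv_le
    (F := fun b t => Real.exp (-(PP c b) * t) * fB b (t ^ 2 - k ^ 2))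
    (F' := fun b t => Real.exp (-(PP c b) * t) * (-(b / PP c b) * t) * fB b (t ^ 2 - k ^ 2)
        + Real.exp (-(PP c b) * t) * gB b (t ^ 2 - k ^ 2))
    (x₀ := b₀) (s := Metric.ball b₀ 1) (μ := volume.restrict (Ioi k))
    (bound := fun t => 2 * (t ^ 1 * Real.exp (-ε₀ * t)))
    (Metric.ball_mem_nhds b₀ one_pos)
    (Filter.Eventually.of_forall fun b => (continuous_Phi b).aestronglyMeasurable)
    ?hFint
    ?hF'meas
    ?hbound
    ?hboundint
    (ae_of_all _ fun t b hb => hasDerivAt_Phi_b hc t b)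
  case hFint =>
    rw [← IntegrableOn]
    apply integrableOn_exp_poly hε₀pos 1 0 (continuous_Phi b₀).continuousOn
    intro t ht
    have h0 : 0 ≤ t := le_trans hk ht
    have hb0M : |b₀| ≤ M := by rw [hM]; linarith
    have hfb := fB_exp_bound (k := k) b₀ hk ht
    have hgap0 := hgap b₀ hb0M
    rw [abs_mul, abs_of_nonneg (Real.exp_nonneg _)]
    calc Real.exp (-(PP c b₀) * t) * |fB b₀ (t ^ 2 - k ^ 2)|
        ≤ Real.exp (-(PP c b₀) * t) * Real.exp (|b₀| * t) :=
          mul_le_mul_of_nonneg_left hfb (Real.exp_nonneg _)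
      _ = Real.exp ((|b₀| - PP c b₀) * t) := by rw [← Real.exp_add]; congr 1; ring
      _ ≤ Real.exp (-ε₀ * t) := by
          apply Real.exp_le_exp.mpr
          have : |b₀| - PP c b₀ ≤ -ε₀ := by linarith
          nlinarith
      _ = 1 * (t ^ 0 * Real.exp (-ε₀ * t)) := by ring
  case hF'meas =>
    apply Continuous.aestronglyMeasurable
    apply Continuous.add
    · exact (((continuous_const.mul continuous_id).rexp).mul
        ((continuous_const.mul continuous_id))).mul
        ((continuous_fB b₀).comp ((continuous_pow 2).sub continuous_const))
    · exact ((continuous_const.mul continuous_id).rexp).mul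
        ((continuous_gB b₀).comp ((continuous_pow 2).sub continuous_const))
  case hbound =>
    rw [ae_restrict_iff' measurableSet_Ioi]
    apply ae_of_all
    intro t ht b hb
    have htk : k ≤ t := le_of_lt ht
    have h0 : 0 ≤ t := le_trans hk htk
    have hbM := hballM b hb
    have hfb := fB_exp_bound (k := k) b hk htk
    have hgb := gB_exp_bound (k := k) b hk htk
    have hgapb := hgap b hbM
    have hPpos := PP_pos hc b
    have hbP : |b| / PP c b ≤ 1 := by
      rw [div_le_one hPpos]; exact (abs_lt_PP hc b).le
    have hexpcomb : Real.exp (-(PP c b) * t) * Real.exp (|b| * t) ≤ Real.exp (-ε₀ * t) := by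
      rw [← Real.exp_add]
      apply Real.exp_le_exp.mpr
      nlinarith
    rw [Real.norm_eq_abs]
    calc |Real.exp (-(PP c b) * t) * (-(b / PP c b) * t) * fB b (t ^ 2 - k ^ 2)
          + Real.exp (-(PP c b) * t) * gB b (t ^ 2 - k ^ 2)|
        ≤ |Real.exp (-(PP c b) * t) * (-(b / PP c b) * t) * fB b (t ^ 2 - k ^ 2)|
          + |Real.exp (-(PP c b) * t) * gB b (t ^ 2 - k ^ 2)| := abs_add_le _ _
      _ ≤ Real.exp (-(PP c b) * t) * t * Real.exp (|b| * t)
          + Real.exp (-(PP c b) * t) * (t * Real.exp (|b| * t)) := by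
          apply add_le_add
          · rw [abs_mul, abs_mul, abs_of_nonneg (Real.exp_nonneg _), abs_mul, abs_neg, abs_div,
              abs_of_nonneg hPpos.le, abs_of_nonneg h0]
            calc Real.exp (-(PP c b) * t) * (|b| / PP c b * t) * |fB b (t ^ 2 - k ^ 2)|
                ≤ Real.exp (-(PP c b) * t) * (1 * t) * Real.exp (|b| * t) := by
                  apply mul_le_mul _ hfb (abs_nonneg _) (by positivity)
                  apply mul_le_mul_of_nonneg_left _ (Real.exp_nonneg _)
                  exact mul_le_mul_of_nonneg_right hbP h0
              _ = Real.exp (-(PP c b) * t) * t * Real.exp (|b| * t) := by ring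
          · rw [abs_mul, abs_of_nonneg (Real.exp_nonneg _)]
            exact mul_le_mul_of_nonneg_left hgb (Real.exp_nonneg _)
      _ = 2 * (t ^ 1 * (Real.exp (-(PP c b) * t) * Real.exp (|b| * t))) := by ring
      _ ≤ 2 * (t ^ 1 * Real.exp (-ε₀ * t)) := by
          apply mul_le_mul_of_nonneg_left _ (by norm_num)
          apply mul_le_mul_of_nonneg_left hexpcomb (by positivity)
  case hboundint =>
    rw [← IntegrableOn]
    apply integrableOn_exp_poly hε₀pos 2 1
    · apply Continuous.continuousOn
      exact continuous_const.mul ((continuous_pow 1).mul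
        ((continuous_const.mul continuous_id).rexp))
    · intro t ht
      have h0 : 0 ≤ t := le_trans hk ht
      rw [abs_of_nonneg (by positivity)]
  -- now key : Integrable ... ∧ HasDerivAt (fun b => ∫ ...) (∫ F' b₀) b₀
  have hzero : (∫ t in Ioi k, (Real.exp (-(PP c b₀) * t) * (-(b₀ / PP c b₀) * t)
      * fB b₀ (t ^ 2 - k ^ 2) + Real.exp (-(PP c b₀) * t) * gB b₀ (t ^ 2 - k ^ 2))) = 0 := by
    have hPpos := PP_pos hc b₀
    have heq : ∀ t : ℝ, Real.exp (-(PP c b₀) * t) * (-(b₀ / PP c b₀) * t)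
        * fB b₀ (t ^ 2 - k ^ 2) + Real.exp (-(PP c b₀) * t) * gB b₀ (t ^ 2 - k ^ 2)
        = (-(PP c b₀)⁻¹) * (Real.exp (-(PP c b₀) * t)
          * (b₀ * t * fB b₀ (t ^ 2 - k ^ 2) - PP c b₀ * gB b₀ (t ^ 2 - k ^ 2))) := by
      intro t
      field_simp
      ring
    simp_rw [heq]
    rw [integral_const_mul, integral_G'_zero hc hk b₀, mul_zero]
  have hkey := key.2
  rw [hzero] at hkey
  exact hkey

lemma HH_const (hc : 0 < c) (hk : 0 ≤ k) (b : ℝ) : HH c k b = HH c k 0 :=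
  is_const_of_deriv_eq_zero
    (fun b => (hasDerivAt_HH hc hk b).differentiableAt)
    (fun b => (hasDerivAt_HH hc hk b).deriv) b 0

lemma HH_zero (hc : 0 < c) (hk : 0 ≤ k) : HH c k 0 = Real.exp (-(c * k)) / c := by
  have hPP0 : PP c 0 = c := by
    rw [PP]
    simp [Real.sqrt_sq hc.le]
  have h1 : HH c k 0 = ∫ t in Ioi k, Real.exp (-c * t) := by
    rw [HH, hPP0]
    apply setIntegral_congr_fun measurableSet_Ioi
    intro t _
    show Real.exp (-c * t) * fB 0 (t ^ 2 - k ^ 2) = Real.exp (-c * t)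
    rw [fB_zero_left, mul_one]
  rw [h1]
  have hderiv : ∀ t : ℝ, HasDerivAt (fun t => -(Real.exp (-c * t) / c)) (Real.exp (-c * t)) t := by
    intro t
    have h1 : HasDerivAt (fun t : ℝ => -c * t) (-c) t := by
      simpa using (hasDerivAt_id t).const_mul (-c)
    have h2 := (h1.exp.div_const c).neg
    refine h2.congr_deriv ?_
    symm
    field_simp
  have htend : Tendsto (fun t : ℝ => -(Real.exp (-c * t) / c)) atTop (𝓝 0) := by
    have := ((tendsto_poly_exp 0 hc).div_const c).neg
    simpa using this
  have hFTC := integral_Ioi_of_hasDerivAt_of_tendsto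
    (f := fun t : ℝ => -(Real.exp (-c * t) / c))
    (f' := fun t : ℝ => Real.exp (-c * t)) (a := k) (m := 0)
    (Continuous.continuousWithinAt (by fun_prop))
    (fun t _ => hderiv t) (exp_neg_integrableOn_Ioi k hc) htend
  rw [hFTC]
  show 0 - -(Real.exp (-c * k) / c) = Real.exp (-(c * k)) / c
  rw [show -c * k = -(c * k) by ring]
  ring

end Main

end B91

open B91

theorem stmt_11 (a s k : ℝ) (ha : 0 ≤ a) (hs : 0 < s) (hk : 0 ≤ k) :
    ∫ t in Ioi k, Real.exp (-s * t) * Real.exp (-(a / 2) * t)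
        * besselI0 ((a / 2) * Real.sqrt (t ^ 2 - k ^ 2))
      = Real.exp (-k * Real.sqrt (s * (s + a))) / Real.sqrt (s * (s + a)) := by
  set c := Real.sqrt (s * (s + a)) with hcdef
  have hsa : 0 < s * (s + a) := by nlinarith
  have hc : 0 < c := Real.sqrt_pos.mpr hsa
  have hc2 : c ^ 2 = s * (s + a) := Real.sq_sqrt hsa.le
  have hPeq : PP c (a / 2) = s + a / 2 := by
    rw [PP, show c ^ 2 + (a / 2) ^ 2 = (s + a / 2) ^ 2 by rw [hc2]; ring]
    exact Real.sqrt_sq (by linarith)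
  have hLHS : (∫ t in Ioi k, Real.exp (-s * t) * Real.exp (-(a / 2) * t)
      * besselI0 ((a / 2) * Real.sqrt (t ^ 2 - k ^ 2))) = HH c k (a / 2) := by
    rw [HH]
    apply setIntegral_congr_fun measurableSet_Ioi
    intro t ht
    have htk : k ≤ t := le_of_lt ht
    have hy : 0 ≤ t ^ 2 - k ^ 2 := y_nonneg hk htk
    show Real.exp (-s * t) * Real.exp (-(a / 2) * t)
        * besselI0 ((a / 2) * Real.sqrt (t ^ 2 - k ^ 2))
      = Real.exp (-(PP c (a / 2)) * t) * fB (a / 2) (t ^ 2 - k ^ 2)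
    have hexp : Real.exp (-s * t) * Real.exp (-(a / 2) * t)
        = Real.exp (-(PP c (a / 2)) * t) := by
      rw [← Real.exp_add, hPeq]; congr 1; ring
    rw [hexp]
    congr 1
    rw [besselI0, fB]
    apply tsum_congr
    intro j
    congr 1
    calc ((a / 2) * Real.sqrt (t ^ 2 - k ^ 2) / 2) ^ (2 * j)
        = ((a / 2) / 2) ^ (2 * j) * (Real.sqrt (t ^ 2 - k ^ 2)) ^ (2 * j) := by
          rw [← mul_pow]; congr 1; ring
      _ = ((a / 2) / 2) ^ (2 * j) * (t ^ 2 - k ^ 2) ^ j := by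
          rw [pow_mul, pow_mul, Real.sq_sqrt hy]
  rw [hLHS, HH_const hc hk, HH_zero hc hk]
  rw [show -(c * k) = -k * c by ring]
end

section
/- For r > 0, s > 0 and x ≥ 0, ∫_x^∞ e^{-s t} e^{(2−r)x − 2t} I₀(2√((t−x)(t+(r−1)x))) dt = (1/√(s² + 4s)) · exp(−(x/2)((2−r)s + r√(s² + 4s))). -/
open MeasureTheory Real Filter Set

lemma aux_choose_le_two_pow (m j : ℕ) : (m.choose j : ℝ) ≤ 2 ^ m := by
  have h : m.choose j ≤ 2 ^ m := by
    rcases le_or_gt j m with h | h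
    · calc m.choose j ≤ ∑ i ∈ Finset.range (m+1), m.choose i :=
            Finset.single_le_sum (fun i _ => Nat.zero_le _)
              (Finset.mem_range.mpr (Nat.lt_succ_of_le h))
      _ = 2 ^ m := Nat.sum_range_choose m
    · simp [Nat.choose_eq_zero_of_lt h]
  exact_mod_cast h

lemma aux_cb_le (j : ℕ) : (Nat.centralBinom j : ℝ) ≤ 4 ^ j := by
  have := aux_choose_le_two_pow (2*j) j
  rw [Nat.centralBinom]
  calc ((2*j).choose j : ℝ) ≤ 2 ^ (2*j) := this
  _ = 4 ^ j := by rw [pow_mul]; norm_num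

lemma aux_summable_cb {z : ℝ} (h : |z| < 1/4) :
    Summable (fun j : ℕ => (Nat.centralBinom j : ℝ) * z ^ j) := by
  apply Summable.of_norm_bounded (g := fun j => (4*|z|)^j)
  · exact summable_geometric_of_lt_one (by positivity) (by linarith)
  · intro j
    rw [norm_mul, mul_pow, norm_pow, Real.norm_of_nonneg (Nat.cast_nonneg _)]
    exact mul_le_mul_of_nonneg_right (aux_cb_le j) (by positivity)

set_option maxHeartbeats 1000000 in
lemma aux_cb_gf {y : ℝ} (h0 : 0 ≤ y) (h1 : y < 1/4) :
    ∑' j : ℕ, (Nat.centralBinom j : ℝ) * y ^ j = 1 / Real.sqrt (1 - 4*y) := by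
  obtain ⟨a, hya, ha4, ha0⟩ : ∃ a : ℝ, y < a ∧ a < 1/4 ∧ 0 < a :=
    ⟨(y + 1/4)/2, by linarith, by linarith, by linarith⟩
  have hu_sum : Summable (fun j : ℕ => (Nat.centralBinom j : ℝ) * (j * a ^ (j-1))) := by
    apply Summable.of_norm_bounded (g := fun j : ℕ => (1/a) * (j * (4*a)^j))
    · apply Summable.mul_left
      have := summable_pow_mul_geometric_of_norm_lt_one (R := ℝ) 1
        (r := 4*a) (by rw [norm_of_nonneg (by positivity)]; linarith)
      simpa using this
    · intro j
      rw [norm_of_nonneg (by positivity)]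
      rcases Nat.eq_zero_or_pos j with rfl | hj
      · simp
      · obtain ⟨i, rfl⟩ := Nat.exists_eq_succ_of_ne_zero hj.ne'
        simp only [Nat.succ_eq_add_one, Nat.cast_add, Nat.cast_one]
        calc (Nat.centralBinom (i+1) : ℝ) * ((i+1) * a ^ (i+1-1))
            ≤ 4^(i+1) * ((i+1) * a ^ (i+1-1)) :=
              mul_le_mul_of_nonneg_right (aux_cb_le _) (by positivity)
          _ = (1/a) * ((i+1) * (4*a)^(i+1)) := by
              simp only [Nat.add_sub_cancel]; field_simp; ring
  have hfderiv : ∀ z ∈ Ioo (-a) a,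
      HasDerivAt (fun w => ∑' j, (Nat.centralBinom j : ℝ) * w ^ j)
        (∑' j, (Nat.centralBinom j : ℝ) * (j * z ^ (j-1))) z := by
    intro z hz
    apply hasDerivAt_tsum_of_isPreconnected hu_sum isOpen_Ioo
      (convex_Ioo _ _).isPreconnected
      (g := fun j w => (Nat.centralBinom j : ℝ) * w ^ j)
      (g' := fun j w => (Nat.centralBinom j : ℝ) * (j * w ^ (j-1)))
      (fun j w _ => by simpa using (hasDerivAt_pow j w).const_mul (Nat.centralBinom j : ℝ))
      (fun j w hw => ?_) (⟨by linarith, ha0⟩ : (0:ℝ) ∈ Ioo (-a) a)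
      (aux_summable_cb (by rw [abs_zero]; norm_num)) hz
    have hwa : |w| ≤ a := le_of_lt (abs_lt.mpr ⟨hw.1, hw.2⟩)
    rw [norm_mul, norm_mul, norm_pow, Real.norm_of_nonneg (Nat.cast_nonneg _),
      Real.norm_of_nonneg (Nat.cast_nonneg _), Real.norm_eq_abs]
    have h1 : |w| ^ (j-1) ≤ a ^ (j-1) := pow_le_pow_left₀ (abs_nonneg w) hwa _
    exact mul_le_mul_of_nonneg_left
      (mul_le_mul_of_nonneg_left h1 (Nat.cast_nonneg _)) (Nat.cast_nonneg _)
  have hgbound : ∀ (j : ℕ) (w : ℝ), w ∈ Ioo (-a) a →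
      ‖(Nat.centralBinom j : ℝ) * (↑j * w ^ (j-1))‖ ≤ (Nat.centralBinom j : ℝ) * (↑j * a ^ (j-1)) := by
    intro j w hw
    have hwa : |w| ≤ a := le_of_lt (abs_lt.mpr ⟨hw.1, hw.2⟩)
    rw [norm_mul, norm_mul, norm_pow, Real.norm_of_nonneg (Nat.cast_nonneg _),
      Real.norm_of_nonneg (Nat.cast_nonneg _), Real.norm_eq_abs]
    have h1 : |w| ^ (j-1) ≤ a ^ (j-1) := pow_le_pow_left₀ (abs_nonneg w) hwa _
    exact mul_le_mul_of_nonneg_left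
      (mul_le_mul_of_nonneg_left h1 (Nat.cast_nonneg _)) (Nat.cast_nonneg _)
  have hSg : ∀ z ∈ Ioo (-a) a, Summable (fun j : ℕ => (Nat.centralBinom j : ℝ) * z ^ j) :=
    fun z hz => aux_summable_cb (lt_trans (abs_lt.mpr ⟨hz.1, hz.2⟩) ha4)
  have hSg' : ∀ z ∈ Ioo (-a) a,
      Summable (fun j : ℕ => (Nat.centralBinom j : ℝ) * (↑j * z ^ (j-1))) :=
    fun z hz => Summable.of_norm_bounded hu_sum (fun j => hgbound j z hz)
  have key : ∀ z ∈ Ioo (-a) a,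
      (1-4*z) * (∑' j : ℕ, (Nat.centralBinom j : ℝ) * (↑j * z ^ (j-1)))
        = 2 * ∑' j : ℕ, (Nat.centralBinom j : ℝ) * z ^ j := by
    intro z hz
    have Sh : Summable (fun j : ℕ => (1-4*z) * ((Nat.centralBinom j : ℝ) * (↑j * z ^ (j-1)))
        - 2 * ((Nat.centralBinom j : ℝ) * z ^ j)) :=
      ((hSg' z hz).mul_left _).sub ((hSg z hz).mul_left 2)
    have hψ : ∀ j : ℕ, (1-4*z) * ((Nat.centralBinom (j+1) : ℝ) * (↑(j+1) * z ^ (j+1-1)))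
        - 2 * ((Nat.centralBinom (j+1) : ℝ) * z ^ (j+1))
        = ((Nat.centralBinom (j+1) : ℝ) * (↑(j+1) * z ^ j))
          - ((Nat.centralBinom (j+2) : ℝ) * (↑(j+2) * z ^ (j+1))) := by
      intro j
      have hr := Nat.succ_mul_centralBinom_succ (j+1)
      have hrc : ((j:ℝ)+2) * (Nat.centralBinom (j+2) : ℝ)
          = 2*(2*((j:ℝ)+1)+1) * (Nat.centralBinom (j+1) : ℝ) := by exact_mod_cast hr
      simp only [Nat.add_sub_cancel]
      push_cast
      linear_combination (z^(j+1)) * hrc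
    have hps : ∀ n : ℕ, (∑ j ∈ Finset.range (n+1),
        ((1-4*z) * ((Nat.centralBinom j : ℝ) * (↑j * z ^ (j-1)))
          - 2 * ((Nat.centralBinom j : ℝ) * z ^ j)))
        = -((Nat.centralBinom (n+1) : ℝ) * (↑(n+1) * z ^ n)) := by
      intro n
      rw [Finset.sum_range_succ']
      rw [Finset.sum_congr rfl (fun j _ => hψ j), Finset.sum_range_sub']
      have hcb1 : (Nat.centralBinom 1 : ℝ) = 2 := by norm_num [Nat.centralBinom]
      simp [hcb1]
      try ring
    have hψ0 : Filter.Tendsto (fun n : ℕ => ((Nat.centralBinom (n+1) : ℝ) * (↑(n+1) * z ^ n)))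
        Filter.atTop (nhds 0) := by
      have hS2 : Summable (fun j : ℕ => (Nat.centralBinom (j+1) : ℝ) * (↑(j+1) * z ^ (j+1-1))) :=
        (summable_nat_add_iff 1).2 (hSg' z hz)
      have := hS2.tendsto_atTop_zero
      simpa using this
    have h0 : (∑' j : ℕ, ((1-4*z) * ((Nat.centralBinom j : ℝ) * (↑j * z ^ (j-1)))
        - 2 * ((Nat.centralBinom j : ℝ) * z ^ j))) = 0 := by
      have ht1 := Sh.hasSum.tendsto_sum_nat
      have ht2 := ht1.comp (Filter.tendsto_add_atTop_nat 1)
      have ht3 : Filter.Tendsto (fun n : ℕ =>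
          -((Nat.centralBinom (n+1) : ℝ) * (↑(n+1) * z ^ n))) Filter.atTop (nhds 0) := by
        simpa using hψ0.neg
      exact tendsto_nhds_unique (ht2.congr hps) ht3
    rw [Summable.tsum_sub ((hSg' z hz).mul_left _) ((hSg z hz).mul_left 2),
      tsum_mul_left, tsum_mul_left] at h0
    linarith
  -- P is constant
  have hP : ∀ z ∈ Ioo (-a) a, HasDerivAt
      (fun w => (∑' j : ℕ, (Nat.centralBinom j : ℝ) * w ^ j) ^ 2 * (1 - 4*w)) 0 z := by
    intro z hz
    have h1 : HasDerivAt (fun w : ℝ => 1 - 4*w) (-4) z := by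
      simpa using ((hasDerivAt_id z).const_mul (4:ℝ)).const_sub 1
    have h2 := ((hfderiv z hz).pow 2).mul h1
    refine h2.congr_deriv (Eq.symm ?_)
    have hk := key z hz
    push_cast [Pi.pow_apply]
    linear_combination (-2 * (∑' j : ℕ, (Nat.centralBinom j : ℝ) * z ^ j) : ℝ) * hk
  have hIcc : Icc (0:ℝ) y ⊆ Ioo (-a) a := fun w hw => ⟨by linarith [hw.1], by linarith [hw.2]⟩
  have hconst := constant_of_has_deriv_right_zero
    (f := fun w => (∑' j : ℕ, (Nat.centralBinom j : ℝ) * w ^ j) ^ 2 * (1 - 4*w))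
    (a := 0) (b := y)
    (fun w hw => ((hP w (hIcc hw)).continuousAt).continuousWithinAt)
    (fun w hw => ((hP w (hIcc ⟨hw.1, hw.2.le⟩)).hasDerivWithinAt))
    y (right_mem_Icc.mpr h0)
  have hf0 : (∑' j : ℕ, (Nat.centralBinom j : ℝ) * (0:ℝ) ^ j) = 1 := by
    rw [tsum_eq_single 0 (fun j hj => by simp [zero_pow hj])]
    simp
  have hconst2 : (∑' j : ℕ, (Nat.centralBinom j : ℝ) * y ^ j) ^ 2 * (1 - 4*y) = 1 := by
    simpa [hf0] using hconst
  have hfy_pos : 0 < ∑' j : ℕ, (Nat.centralBinom j : ℝ) * y ^ j := by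
    have h1 : (1:ℝ) ≤ ∑' j : ℕ, (Nat.centralBinom j : ℝ) * y ^ j := by
      have := Summable.le_tsum (hSg y ⟨by linarith, hya⟩) 0
        (fun j _ => by positivity)
      simpa using this
    linarith
  have h4y : 0 < 1 - 4*y := by linarith
  have hsq : (∑' j : ℕ, (Nat.centralBinom j : ℝ) * y ^ j) ^ 2 = 1 / (1-4*y) := by
    rw [eq_div_iff h4y.ne']
    exact hconst2
  rw [← Real.sqrt_sq hfy_pos.le, hsq, one_div, one_div, Real.sqrt_inv]

lemma aux_S {p : ℝ} (hp : 2 < p) (n : ℕ) :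
    Summable (fun j : ℕ => ((n+2*j).choose j : ℝ) * (1/p^2) ^ j) := by
  have hp0 : 0 < p := by linarith
  have hp2 : 4 < p^2 := by nlinarith
  apply Summable.of_nonneg_of_le (fun j => by positivity)
    (f := fun j : ℕ => 2^n * (4/p^2)^j)
  · intro j
    calc ((n+2*j).choose j : ℝ) * (1/p^2) ^ j ≤ 2^(n+2*j) * (1/p^2)^j :=
          mul_le_mul_of_nonneg_right (aux_choose_le_two_pow _ _) (by positivity)
      _ = 2^n * (4/p^2)^j := by
          rw [pow_add, pow_mul, mul_assoc, ← mul_pow,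
            show (2:ℝ)^2 * (1/p^2) = 4/p^2 by ring]
  · exact Summable.mul_left _ (summable_geometric_of_lt_one (by positivity)
      (by rw [div_lt_one (by positivity)]; linarith))

set_option maxHeartbeats 1600000 in
lemma aux_A {p : ℝ} (hp : 2 < p) (n : ℕ) :
    ∑' j : ℕ, ((n+2*j).choose j : ℝ) * (1/p^2) ^ j
      = (p / Real.sqrt (p^2-4)) * (p*(p - Real.sqrt (p^2-4))/2) ^ n := by
  have hp0 : 0 < p := by linarith
  have hp2 : 4 < p^2 := by nlinarith
  set q : ℝ := Real.sqrt (p^2-4) with hqdef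
  have hq0 : 0 < q := Real.sqrt_pos.mpr (by linarith)
  have hq2 : q^2 = p^2-4 := Real.sq_sqrt (by linarith)
  set y : ℝ := 1/p^2 with hydef
  have hy0 : 0 ≤ y := by positivity
  have hy1 : y < 1/4 := by
    rw [hydef, div_lt_div_iff₀ (by positivity) (by norm_num)]; nlinarith
  -- base case 0
  have base0 : ∑' j : ℕ, ((0+2*j).choose j : ℝ) * y ^ j = p / q := by
    have h00 : ∀ j : ℕ, ((0+2*j).choose j : ℝ) = (Nat.centralBinom j : ℝ) := by
      intro j; rw [Nat.centralBinom]; norm_num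
    rw [tsum_congr (fun j => by rw [h00 j]), aux_cb_gf hy0 hy1]
    have h1 : 1 - 4*y = (p^2-4)/p^2 := by rw [hydef]; field_simp
    rw [h1, Real.sqrt_div (by linarith : (0:ℝ) ≤ p^2-4), Real.sqrt_sq hp0.le, one_div_div]
  -- A 0 = 1 + 2 y A 1
  have rel01 : ∑' j : ℕ, ((0+2*j).choose j : ℝ) * y ^ j
      = 1 + 2*y * ∑' j : ℕ, ((1+2*j).choose j : ℝ) * y ^ j := by
    have hnat : ∀ j : ℕ, ((0+2*(j+1)).choose (j+1)) = 2 * ((1+2*j).choose j) := by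
      intro j
      have h1 := Nat.choose_succ_succ (2*j+1) j
      have h2 : (2*j+1).choose (j+1) = (2*j+1).choose j := by
        have h3 := Nat.choose_symm (show j+1 ≤ 2*j+1 by omega)
        rw [show 2*j+1-(j+1) = j by omega] at h3
        exact h3.symm
      rw [show 0+2*(j+1) = 2*j+1+1 by ring, h1, h2, show 1+2*j = 2*j+1 by ring]
      omega
    have tail0 : ∑' j : ℕ, ((0+2*(j+1)).choose (j+1) : ℝ) * y ^ (j+1)
        = 2*y * ∑' j : ℕ, ((1+2*j).choose j : ℝ) * y ^ j := by
      rw [← tsum_mul_left]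
      apply tsum_congr; intro j
      rw [hnat j]; push_cast; ring
    rw [Summable.tsum_eq_zero_add (aux_S hp 0), tail0]
    norm_num
  -- recurrence
  have recn : ∀ n : ℕ, ∑' j : ℕ, ((n+1+2*j).choose j : ℝ) * y ^ j
      = (∑' j : ℕ, ((n+2*j).choose j : ℝ) * y ^ j)
        + y * ∑' j : ℕ, ((n+2+2*j).choose j : ℝ) * y ^ j := by
    intro n
    have hnat2 : ∀ j : ℕ, (n+1+2*(j+1)).choose (j+1)
        = (n+2+2*j).choose j + (n+2*(j+1)).choose (j+1) := by
      intro j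
      have h1 := Nat.choose_succ_succ (n+2*j+2) j
      rw [show n+1+2*(j+1) = n+2*j+2+1 by ring, h1,
        show n+2+2*j = n+2*j+2 by ring, show n+2*(j+1) = n+2*j+2 by ring]
    have S2 : Summable (fun j : ℕ => ((n+2*(j+1)).choose (j+1) : ℝ) * y^(j+1)) :=
      (summable_nat_add_iff 1).2 (aux_S hp n)
    have hsplit : ∑' j : ℕ, ((n+1+2*(j+1)).choose (j+1) : ℝ) * y^(j+1)
        = (y * ∑' j : ℕ, ((n+2+2*j).choose j : ℝ) * y^j)
          + (∑' j : ℕ, ((n+2*(j+1)).choose (j+1) : ℝ) * y^(j+1)) := by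
      rw [← tsum_mul_left, ← Summable.tsum_add ((aux_S hp (n+2)).mul_left y) S2]
      apply tsum_congr; intro j
      rw [hnat2 j]; push_cast; ring
    have htail : ∑' j : ℕ, ((n+2*(j+1)).choose (j+1) : ℝ) * y^(j+1)
        = (∑' j : ℕ, ((n+2*j).choose j : ℝ) * y ^ j) - 1 := by
      rw [Summable.tsum_eq_zero_add (aux_S hp n)]
      simp only [mul_zero, add_zero, Nat.choose_zero_right, Nat.cast_one, pow_zero, one_mul]
      ring
    rw [Summable.tsum_eq_zero_add (aux_S hp (n+1)), hsplit, htail]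
    simp only [mul_zero, add_zero, Nat.choose_zero_right, Nat.cast_one, pow_zero, one_mul]
    ring
  -- two-step induction
  have hC2 : (p*(p-q)/2)^2 = p^2*((p*(p-q)/2) - 1) := by linear_combination (p^2/4)*hq2
  have base1 : ∑' j : ℕ, ((1+2*j).choose j : ℝ) * y ^ j
      = (p/q) * (p*(p-q)/2) ^ 1 := by
    set T : ℝ := ∑' j : ℕ, ((1+2*j).choose j : ℝ) * y ^ j with hT
    have h1 : 1 + 2*y * T = p/q := by rw [← rel01, base0]
    have h2 : 2*y*T = p/q - 1 := by linarith
    rw [hydef] at h2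
    rw [pow_one]
    field_simp at h2 ⊢
    linear_combination h2
  suffices H : ∀ m : ℕ,
      (∑' j : ℕ, ((m+2*j).choose j : ℝ) * y ^ j = (p/q) * (p*(p-q)/2)^m) ∧
      (∑' j : ℕ, ((m+1+2*j).choose j : ℝ) * y^j = (p/q) * (p*(p-q)/2)^(m+1)) by
    exact (H _).1
  intro m
  induction m with
  | zero =>
    constructor
    · rw [pow_zero, mul_one]; exact base0
    · simpa using base1
  | succ m ih =>
    refine ⟨ih.2, ?_⟩
    have h3 := recn m
    rw [ih.1, ih.2] at h3
    have hidx : ∑' j : ℕ, ((m+1+1+2*j).choose j : ℝ) * y ^ j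
        = ∑' j : ℕ, ((m+2+2*j).choose j : ℝ) * y ^ j :=
      tsum_congr (fun j => by rw [show m+1+1+2*j = m+2+2*j from by omega])
    rw [hidx]
    set S : ℝ := ∑' j : ℕ, ((m+2+2*j).choose j : ℝ) * y ^ j with hS
    have h5 : y * S = (p/q) * (p*(p-q)/2)^(m+1) - (p/q) * (p*(p-q)/2)^m := by linarith
    rw [hydef] at h5
    have h6 : S = p^2 * ((p/q) * (p*(p-q)/2)^(m+1) - (p/q) * (p*(p-q)/2)^m) := by
      field_simp at h5
      field_simp
      linear_combination h5
    rw [h6, pow_succ, pow_succ]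
    linear_combination (-((p/q) * (p*(p-q)/2)^m)) * hC2

lemma aux_exp_tsum (x : ℝ) : Real.exp x = ∑' n : ℕ, x ^ n / n.factorial := by
  rw [Real.exp_eq_exp_ℝ, NormedSpace.exp_eq_tsum_div]

lemma aux_pow_le_exp {x : ℝ} (hx : 0 ≤ x) (M : ℕ) :
    x ^ M / M.factorial ≤ Real.exp x := by
  rw [aux_exp_tsum]
  exact Summable.le_tsum (Real.summable_pow_div_factorial x) M
    (fun j _ => by positivity)

lemma aux_integrableOn_exp_pow (p k : ℝ) (hp : 0 < p) (M : ℕ) :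
    IntegrableOn (fun v : ℝ => Real.exp (-(p*v)) * (v - k)^M) (Ioi k) := by
  have hint : IntegrableOn (fun v : ℝ =>
      (M.factorial * (2/p)^M * Real.exp (-(p*k/2))) * Real.exp (-(p/2) * v)) (Ioi k) :=
    (exp_neg_integrableOn_Ioi k (by positivity)).const_mul _
  apply Integrable.mono' hint
  · have hc : Continuous (fun v : ℝ => Real.exp (-(p*v)) * (v - k)^M) := by fun_prop
    exact hc.aestronglyMeasurable.restrict
  · filter_upwards [ae_restrict_mem measurableSet_Ioi] with v hv
    have hvk : 0 ≤ v - k := by simp at hv; linarith [hv]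
    rw [Real.norm_of_nonneg (by positivity)]
    have h1 : (v-k)^M ≤ M.factorial * (2/p)^M * Real.exp (p*(v-k)/2) := by
      have h2 := aux_pow_le_exp (show (0:ℝ) ≤ p*(v-k)/2 by positivity) M
      rw [div_le_iff₀ (by positivity)] at h2
      calc (v-k)^M = ((p*(v-k)/2)^M) * (2/p)^M := by
            rw [← mul_pow]; congr 1; field_simp
        _ ≤ (Real.exp (p*(v-k)/2) * M.factorial) * (2/p)^M := by
            exact mul_le_mul_of_nonneg_right h2 (by positivity)
        _ = M.factorial * (2/p)^M * Real.exp (p*(v-k)/2) := by ring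
    calc Real.exp (-(p*v)) * (v-k)^M
        ≤ Real.exp (-(p*v)) * (M.factorial * (2/p)^M * Real.exp (p*(v-k)/2)) :=
          mul_le_mul_of_nonneg_left h1 (le_of_lt (Real.exp_pos _))
      _ = M.factorial * (2/p)^M * Real.exp (-(p*k/2)) * Real.exp (-(p/2) * v) := by
          rw [show rexp (-(p * v)) * (↑M.factorial * (2 / p) ^ M * rexp (p * (v - k) / 2))
              = ↑M.factorial * (2 / p) ^ M * (rexp (-(p * v)) * rexp (p * (v - k) / 2)) by ring,
            show ↑M.factorial * (2 / p) ^ M * rexp (-(p * k / 2)) * rexp (-(p / 2) * v)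
              = ↑M.factorial * (2 / p) ^ M * (rexp (-(p * k / 2)) * rexp (-(p / 2) * v)) by ring,
            ← Real.exp_add, ← Real.exp_add]
          congr 1
          ring


lemma aux_shift (F : ℝ → ℝ) (b c : ℝ) :
    ∫ t in Ioi b, F t = ∫ u in Ioi (b - c), F (u + c) := by
  rw [← preimage_add_const_Ioi]
  exact ((measurePreserving_add_right volume c).setIntegral_preimage_emb
    (measurableEmbedding_addRight c) F (Ioi b)).symm

lemma aux_gamma (p : ℝ) (hp : 0 < p) (M : ℕ) :
    ∫ v in Ioi (0:ℝ), Real.exp (-(p*v)) * v^M = M.factorial / p^(M+1) := by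
  have h := integral_rpow_mul_exp_neg_mul_Ioi (a := (M:ℝ)+1) (r := p)
    (by positivity) hp
  rw [show ((M:ℝ)+1-1) = (M:ℝ) by ring] at h
  rw [show ∫ v in Ioi (0:ℝ), Real.exp (-(p*v)) * v^M
      = ∫ t in Ioi (0:ℝ), t ^ (M:ℝ) * Real.exp (-(p*t)) from
    setIntegral_congr_fun measurableSet_Ioi (fun t ht => by
      rw [Real.rpow_natCast]; ring), h]
  rw [show ((M:ℝ)+1) = ((M+1 : ℕ) : ℝ) by push_cast; ring, Real.rpow_natCast,
    show ((M+1 : ℕ) : ℝ) = (M:ℝ)+1 by push_cast; ring, Real.Gamma_nat_eq_factorial]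
  rw [div_pow, one_pow]
  ring

lemma aux_int_shifted (p k : ℝ) (hp : 0 < p) (M : ℕ) :
    ∫ u in Ioi k, Real.exp (-(p*u)) * (u - k)^M
      = Real.exp (-(p*k)) * (M.factorial / p^(M+1)) := by
  rw [aux_shift _ k k]
  simp only [sub_self]
  rw [show (fun u => Real.exp (-(p*(u+k))) * (u+k-k)^M)
      = fun u => Real.exp (-(p*k)) * (Real.exp (-(p*u)) * u^M) from funext (fun u => by
    rw [show -(p*(u+k)) = -(p*u) + -(p*k) by ring, Real.exp_add]; ring_nf)]
  rw [integral_const_mul, aux_gamma p hp M]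

lemma aux_binom_pt (p k : ℝ) (m : ℕ) (u : ℝ) :
    Real.exp (-(p*u)) * (u^2-k^2)^m
      = ∑ j ∈ Finset.range (m+1),
          ((m.choose j : ℝ) * (2*k)^(m-j)) * (Real.exp (-(p*u)) * (u-k)^(m+j)) := by
  have h1 : (u^2 - k^2)^m = (u-k)^m * ((u-k) + 2*k)^m := by
    rw [← mul_pow]; congr 1; ring
  rw [h1, add_pow, Finset.mul_sum, Finset.mul_sum]
  refine Finset.sum_congr rfl fun j hj => ?_
  rw [pow_add]
  ring

lemma aux_integrableOn_sq (p k : ℝ) (hp : 0 < p) (m : ℕ) :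
    IntegrableOn (fun u : ℝ => Real.exp (-(p*u)) * (u^2-k^2)^m) (Ioi k) := by
  rw [show (fun u : ℝ => Real.exp (-(p*u)) * (u^2-k^2)^m)
      = fun u => ∑ j ∈ Finset.range (m+1),
          ((m.choose j : ℝ) * (2*k)^(m-j)) * (Real.exp (-(p*u)) * (u-k)^(m+j)) from
    funext (aux_binom_pt p k m)]
  exact integrable_finset_sum _ (fun j _ =>
    (aux_integrableOn_exp_pow p k hp (m+j)).const_mul _)

lemma aux_integral_sq (p k : ℝ) (hp : 0 < p) (m : ℕ) :
    ∫ u in Ioi k, Real.exp (-(p*u)) * (u^2-k^2)^m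
      = Real.exp (-(p*k)) * ∑ j ∈ Finset.range (m+1),
          (m.choose j : ℝ) * (2*k)^(m-j) * ((m+j).factorial / p^(m+j+1)) := by
  rw [show (fun u : ℝ => Real.exp (-(p*u)) * (u^2-k^2)^m)
      = fun u => ∑ j ∈ Finset.range (m+1),
          ((m.choose j : ℝ) * (2*k)^(m-j)) * (Real.exp (-(p*u)) * (u-k)^(m+j)) from
    funext (aux_binom_pt p k m)]
  rw [integral_finset_sum _ (fun j _ =>
    (aux_integrableOn_exp_pow p k hp (m+j)).const_mul _)]
  rw [Finset.mul_sum]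
  refine Finset.sum_congr rfl fun j hj => ?_
  rw [integral_const_mul, aux_int_shifted p k hp (m+j)]
  ring

set_option maxHeartbeats 1000000 in
lemma aux_core {p k : ℝ} (hp : 2 < p) (hk : 0 ≤ k) :
    ∫ u in Ioi k, Real.exp (-(p*u)) * besselI0 (2*Real.sqrt ((u-k)*(u+k)))
      = Real.exp (-(k*Real.sqrt (p^2-4))) / Real.sqrt (p^2-4) := by
  have hp0 : 0 < p := by linarith
  have hp2 : 4 < p^2 := by nlinarith
  set q : ℝ := Real.sqrt (p^2-4) with hqdef
  have hq0 : 0 < q := Real.sqrt_pos.mpr (by linarith)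
  have hq2 : q^2 = p^2-4 := Real.sq_sqrt (by linarith)
  have hqp : q < p := by nlinarith
  -- Step A : rewrite the integrand as a series
  have hcong : ∀ u ∈ Ioi k, Real.exp (-(p*u)) * besselI0 (2*Real.sqrt ((u-k)*(u+k)))
      = ∑' m : ℕ, Real.exp (-(p*u)) * ((u^2-k^2)^m / ((m.factorial : ℝ))^2) := by
    intro u hu
    rw [mem_Ioi] at hu
    have hX : (u-k)*(u+k) = u^2 - k^2 := by ring
    have hX0 : (0:ℝ) ≤ u^2 - k^2 := by nlinarith
    rw [hX, besselI0, ← tsum_mul_left]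
    apply tsum_congr; intro m
    congr 1
    rw [show 2 * Real.sqrt (u^2-k^2) / 2 = Real.sqrt (u^2-k^2) by ring, pow_mul,
      Real.sq_sqrt hX0]
  rw [setIntegral_congr_fun measurableSet_Ioi hcong]
  -- integrability of each term
  have hfun : ∀ m : ℕ, (fun u : ℝ => Real.exp (-(p*u)) * ((u^2-k^2)^m / ((m.factorial : ℝ))^2))
      = fun u => (Real.exp (-(p*u)) * (u^2-k^2)^m) / ((m.factorial : ℝ))^2 :=
    fun m => funext (fun u => by ring)
  have hInt : ∀ m : ℕ, IntegrableOn
      (fun u : ℝ => Real.exp (-(p*u)) * ((u^2-k^2)^m / ((m.factorial : ℝ))^2)) (Ioi k) := by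
    intro m
    rw [hfun m]
    exact (aux_integrableOn_sq p k hp0 m).div_const _
  have hnnpt : ∀ m : ℕ, ∀ u ∈ Ioi k,
      0 ≤ Real.exp (-(p*u)) * ((u^2-k^2)^m / ((m.factorial : ℝ))^2) := by
    intro m u hu
    rw [mem_Ioi] at hu
    have hX0 : (0:ℝ) ≤ u^2 - k^2 := by nlinarith
    exact mul_nonneg (Real.exp_pos _).le (div_nonneg (pow_nonneg hX0 m) (by positivity))
  have hV : ∀ m : ℕ, 0 ≤ ∫ u in Ioi k, Real.exp (-(p*u)) * ((u^2-k^2)^m / ((m.factorial : ℝ))^2) :=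
    fun m => setIntegral_nonneg measurableSet_Ioi (hnnpt m)
  -- auxiliary double-indexed families
  set G : ℕ × ℕ → ℝ := fun nj => ((2*k)^nj.1 / (nj.1.factorial * p^(nj.1+1)))
    * (((nj.1+2*nj.2).choose nj.2 : ℝ) * (1/p^2) ^ nj.2) with hGdef
  set Ft : ℕ × ℕ → ℝ := fun mj => if mj.2 ≤ mj.1 then
      (mj.1.choose mj.2 : ℝ) * (2*k)^(mj.1-mj.2) * ((mj.1+mj.2).factorial / p^(mj.1+mj.2+1))
        / ((mj.1.factorial : ℝ))^2 else 0 with hFtdef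
  have hGnn : ∀ nj : ℕ × ℕ, 0 ≤ G nj := by
    intro nj
    apply mul_nonneg (div_nonneg (pow_nonneg (by linarith) _) (by positivity))
    exact mul_nonneg (Nat.cast_nonneg _) (by positivity)
  have hFtnn : ∀ mj : ℕ × ℕ, 0 ≤ Ft mj := by
    intro mj
    rw [hFtdef]
    dsimp only
    split
    · apply div_nonneg _ (by positivity)
      apply mul_nonneg (mul_nonneg (Nat.cast_nonneg _) (pow_nonneg (by linarith) _))
      positivity
    · exact le_refl 0
  have hGfiber : ∀ n : ℕ, Summable (fun j : ℕ => G (n, j)) := by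
    intro n
    apply Summable.congr ((aux_S hp n).mul_left ((2*k)^n / (n.factorial * p^(n+1))))
    intro j
    simp only [hGdef]
  have hGfibersum : ∀ n : ℕ, ∑' j : ℕ, G (n, j)
      = ((2*k)^n / (n.factorial * p^(n+1))) * ((p/q) * (p*(p-q)/2)^n) := by
    intro n
    rw [hGdef]
    dsimp only
    rw [tsum_mul_left, aux_A hp n]
  have hGrowval : ∀ n : ℕ, (1/q) * ((k*(p-q))^n / n.factorial) = ∑' j : ℕ, G (n, j) := by
    intro n
    rw [hGfibersum n]
    have hfac : (0:ℝ) < n.factorial := by exact_mod_cast n.factorial_pos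
    rw [mul_pow k (p-q), mul_pow 2 k, div_pow, mul_pow p (p-q)]
    field_simp
    ring
  have hGrow : Summable (fun n : ℕ => ∑' j : ℕ, G (n, j)) :=
    Summable.congr ((Real.summable_pow_div_factorial (k*(p-q))).mul_left (1/q)) hGrowval
  have SummableG : Summable G := (summable_prod_of_nonneg hGnn).mpr ⟨hGfiber, hGrow⟩
  have tsumG : ∑' nj : ℕ × ℕ, G nj = (1/q) * Real.exp (k*(p-q)) := by
    rw [Summable.tsum_prod' SummableG hGfiber]
    rw [show (∑' (n : ℕ) (j : ℕ), G (n, j)) = ∑' n : ℕ, (1/q) * ((k*(p-q))^n / n.factorial)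
      from tsum_congr (fun n => (hGrowval n).symm)]
    rw [tsum_mul_left, ← aux_exp_tsum]
  -- reindexing
  have hcomp : ∀ nj : ℕ × ℕ, Ft (nj.1+nj.2, nj.2) = G nj := by
    rintro ⟨n, j⟩
    rw [hFtdef, hGdef]
    dsimp only
    rw [if_pos (show j ≤ n + j by omega)]
    have h1 : ((n+j).choose j : ℝ) = (n+j).factorial / (j.factorial * n.factorial) := by
      rw [Nat.cast_choose ℝ (show j ≤ n+j by omega), Nat.add_sub_cancel]
    have h2 : ((n+2*j).choose j : ℝ) = (n+2*j).factorial / (j.factorial * (n+j).factorial) := by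
      rw [Nat.cast_choose ℝ (show j ≤ n+2*j by omega), show n+2*j-j = n+j by omega]
    rw [show n+j-j = n by omega, show n+j+j = n+2*j by omega, h1, h2]
    have e1 : ((n+j).factorial : ℝ) ≠ 0 := by exact_mod_cast (n+j).factorial_ne_zero
    have e2 : (j.factorial : ℝ) ≠ 0 := by exact_mod_cast j.factorial_ne_zero
    have e3 : (n.factorial : ℝ) ≠ 0 := by exact_mod_cast n.factorial_ne_zero
    have e4 : p ≠ 0 := hp0.ne'
    field_simp
    rw [show (2*k)^n * p^(n+2*j+1) * (1/p^2)^j = (2*k)^n * p^(n+1) * ((p^2)^j * ((p^2)^j)⁻¹) by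
      rw [one_div, inv_pow]; ring, mul_inv_cancel₀ (pow_ne_zero _ (pow_ne_zero _ e4)), mul_one]
  have hinj : Function.Injective (fun nj : ℕ × ℕ => (nj.1+nj.2, nj.2)) := by
    rintro ⟨a, b⟩ ⟨c, d⟩ h
    have h1 : a + b = c + d := congrArg Prod.fst h
    have h2 : b = d := congrArg Prod.snd h
    have h3 : a = c := by omega
    simp [h2, h3]
  have hsupp : Function.support Ft ⊆ Set.range (fun nj : ℕ × ℕ => (nj.1+nj.2, nj.2)) := by
    rintro ⟨m, j⟩ hmj
    rcases le_or_gt j m with h | h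
    · refine ⟨(m-j, j), ?_⟩
      show ((m-j)+j, j) = (m, j)
      rw [Nat.sub_add_cancel h]
    · exfalso
      apply hmj
      rw [hFtdef]
      dsimp only
      rw [if_neg (by omega)]
  have hzero : ∀ x ∉ Set.range (fun nj : ℕ × ℕ => (nj.1+nj.2, nj.2)), Ft x = 0 :=
    fun x hx => Function.notMem_support.mp (fun hs => hx (hsupp hs))
  have SummableFt : Summable Ft := by
    rw [← Function.Injective.summable_iff hinj hzero]
    exact Summable.congr SummableG (fun nj => (hcomp nj).symm)
  have tsumFt : ∑' mj : ℕ × ℕ, Ft mj = ∑' nj : ℕ × ℕ, G nj := by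
    rw [← Function.Injective.tsum_eq hinj hsupp]
    exact tsum_congr hcomp
  -- rows of Ft are the integrals
  have hVum : ∀ m : ℕ, (∫ u in Ioi k, Real.exp (-(p*u)) * ((u^2-k^2)^m / ((m.factorial : ℝ))^2))
      = Real.exp (-(p*k)) * ∑' j : ℕ, Ft (m, j) := by
    intro m
    have hts : ∑' j : ℕ, Ft (m, j) = ∑ j ∈ Finset.range (m+1), Ft (m, j) := by
      apply tsum_eq_sum
      intro j hj
      rw [hFtdef]
      dsimp only
      rw [if_neg (by simp at hj; omega)]
    rw [hts, hfun m, integral_div, aux_integral_sq p k hp0 m, Finset.sum_congr rfl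
      (fun j hj => show Ft (m, j) = (m.choose j : ℝ) * (2*k)^(m-j)
          * ((m+j).factorial / p^(m+j+1)) / ((m.factorial : ℝ))^2 from by
        rw [hFtdef]; dsimp only; rw [if_pos (by simp at hj; omega)]), ← Finset.sum_div]
    ring
  have hFtrows := ((summable_prod_of_nonneg hFtnn).mp SummableFt).2
  have SummableV : Summable (fun m : ℕ =>
      ∫ u in Ioi k, Real.exp (-(p*u)) * ((u^2-k^2)^m / ((m.factorial : ℝ))^2)) :=
    Summable.congr (hFtrows.mul_left (Real.exp (-(p*k)))) (fun m => (hVum m).symm)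
  have tsumV : ∑' m : ℕ, (∫ u in Ioi k, Real.exp (-(p*u)) * ((u^2-k^2)^m / ((m.factorial : ℝ))^2))
      = Real.exp (-(k*q)) / q := by
    rw [tsum_congr hVum, tsum_mul_left, ← Summable.tsum_prod' SummableFt ((summable_prod_of_nonneg hFtnn).mp SummableFt).1, tsumFt, tsumG,
      ← mul_assoc, mul_comm (Real.exp (-(p*k))) (1/q), mul_assoc, ← Real.exp_add]
    rw [show -(p*k) + k*(p-q) = -(k*q) by ring]
    ring
  -- interchange integral and sum
  rw [integral_tsum (fun m => (Continuous.aestronglyMeasurable (by fun_prop)).restrict) ?_]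
  · exact tsumV
  · have hlint : ∀ m : ℕ,
        (∫⁻ u in Ioi k, ‖Real.exp (-(p*u)) * ((u^2-k^2)^m / ((m.factorial:ℝ))^2)‖ₑ ∂volume)
        = ENNReal.ofReal
            (∫ u in Ioi k, Real.exp (-(p*u)) * ((u^2-k^2)^m / ((m.factorial:ℝ))^2)) := by
      intro m
      rw [ofReal_integral_eq_lintegral_ofReal (hInt m)
        ((ae_restrict_iff' measurableSet_Ioi).mpr (Eventually.of_forall (hnnpt m)))]
      apply lintegral_congr_ae
      filter_upwards [ae_restrict_mem measurableSet_Ioi] with u hu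
      rw [Real.enorm_eq_ofReal (hnnpt m u hu)]
    rw [show (∑' m : ℕ,
        ∫⁻ u in Ioi k, ‖Real.exp (-(p*u)) * ((u^2-k^2)^m / ((m.factorial:ℝ))^2)‖ₑ ∂volume)
        = ∑' m : ℕ, ENNReal.ofReal
            (∫ u in Ioi k, Real.exp (-(p*u)) * ((u^2-k^2)^m / ((m.factorial:ℝ))^2))
      from tsum_congr hlint]
    rw [← ENNReal.ofReal_tsum_of_nonneg hV SummableV]
    exact ENNReal.ofReal_ne_top

theorem stmt_13 (r s x : ℝ) (hr : 0 < r) (hs : 0 < s) (hx : 0 ≤ x) :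
    ∫ t in Ioi x, Real.exp (-s * t) * Real.exp ((2 - r) * x - 2 * t)
        * besselI0 (2 * Real.sqrt ((t - x) * (t + (r - 1) * x)))
      = (1 / Real.sqrt (s ^ 2 + 4 * s))
        * Real.exp (-(x / 2) * ((2 - r) * s + r * Real.sqrt (s ^ 2 + 4 * s))) := by
  have hp : 2 < s + 2 := by linarith
  have hk : (0:ℝ) ≤ r*x/2 := by positivity
  rw [aux_shift _ x ((2-r)*x/2), show x - (2-r)*x/2 = r*x/2 by ring]
  have hptwise : ∀ u : ℝ, Real.exp (-s * (u + (2-r)*x/2))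
      * Real.exp ((2 - r) * x - 2 * (u + (2-r)*x/2))
      * besselI0 (2 * Real.sqrt ((u + (2-r)*x/2 - x) * (u + (2-r)*x/2 + (r - 1) * x)))
      = Real.exp (-(s*((2-r)*x/2))) * (Real.exp (-((s+2)*u))
          * besselI0 (2 * Real.sqrt ((u - r*x/2) * (u + r*x/2)))) := by
    intro u
    rw [show (u + (2-r)*x/2 - x) = u - r*x/2 by ring,
      show (u + (2-r)*x/2 + (r - 1) * x) = u + r*x/2 by ring]
    have h1 : Real.exp (-s*(u+(2-r)*x/2)) * Real.exp ((2-r)*x - 2*(u+(2-r)*x/2))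
        = Real.exp (-(s*((2-r)*x/2))) * Real.exp (-((s+2)*u)) := by
      rw [← Real.exp_add, ← Real.exp_add]
      congr 1
      ring
    rw [mul_assoc, ← mul_assoc, h1, mul_assoc]
  simp only [hptwise]
  rw [integral_const_mul, aux_core hp hk, show (s+2)^2 - 4 = s^2 + 4*s by ring]
  rw [show Real.exp (-(s*((2-r)*x/2)))
        * (Real.exp (-(r*x/2 * Real.sqrt (s^2+4*s))) / Real.sqrt (s^2+4*s))
      = (1/Real.sqrt (s^2+4*s))
        * Real.exp (-(s*((2-r)*x/2)) + -(r*x/2 * Real.sqrt (s^2+4*s))) from by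
    rw [Real.exp_add]; ring]
  congr 1
  ring
end
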